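/- arXiv:1705.01275 — 5 statements merged into one kernel-verified Lean document; each statement's English description precedes it below -/
import Mathlib

section
/- Let p be a prime, n ≥ 1, and let F = GF(p^n) be the field with p^n elements. Let A(n, p) be the group of all 3 × 3 lower unitriangular matrices V(a, b, c) over F with entry a in position (2,1), b in position (3,1), c in position (3,2), and 1's on the diagonal, for a, b, c ∈ F, under matrix multiplication. Then the Laplacian spectrum of the non-commuting graph 𝒜_{A(n, p)} is {0^1, (p^{3n} − p^{2n})^{p^{3n} − 2p^n − 1}, (p^{3n} − p^n)^{p^n}}. -/
open Polynomial

section AuxDet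
open Matrix

lemma det_diag_add_const {K : Type*} [Fintype K] [DecidableEq K] [Nonempty K] (a b : ℝ)
    (ha : a ≠ 0) :
    (Matrix.of fun k k' : K => (if k = k' then a else 0) + b).det
      = a ^ (Fintype.card K - 1) * (a + Fintype.card K * b) := by
  have h1 : (Matrix.of fun k k' : K => (if k = k' then a else 0) + b) =
      a • (1 + Matrix.replicateCol Unit (fun _ : K => a⁻¹ * b) * Matrix.replicateRow Unit (fun _ : K => (1:ℝ))) := by
    ext i j
    by_cases h : i = j <;>
      simp [h, Matrix.mul_apply, Matrix.one_apply, mul_add, ha, Matrix.smul_apply,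
        Matrix.add_apply, mul_inv_cancel_left₀, Matrix.replicateCol_apply, Matrix.replicateRow_apply, ha]
  rw [h1, Matrix.det_smul, Matrix.det_one_add_replicateCol_mul_replicateRow]
  have hcard : (1 : ℕ) ≤ Fintype.card K := Fintype.card_pos
  have h2 : a ^ Fintype.card K = a ^ (Fintype.card K - 1) * a := by
    rw [← pow_succ, Nat.sub_add_cancel hcard]
  rw [h2]
  simp only [dotProduct, Finset.sum_const, Finset.card_univ, one_mul, nsmul_eq_mul]
  field_simp

lemma det_multipartite {K W : Type*} [Fintype K] [DecidableEq K] [Nonempty K]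
    [Fintype W] [DecidableEq W] [Nonempty W] (t : ℝ) (ht : t ≠ 0)
    (htm : t ≠ (Fintype.card W : ℝ)) :
    (Matrix.of fun z z' : K × W =>
        (if z = z' then t else 0) + (if z.1 = z'.1 then 0 else 1)).det
      = t ^ (Fintype.card K * (Fintype.card W - 1))
        * (t - Fintype.card W) ^ (Fintype.card K - 1)
        * (t + ((Fintype.card K : ℝ) - 1) * Fintype.card W) := by
  classical
  set k := Fintype.card K with hk
  set m := Fintype.card W with hm
  set U : Matrix (K × W) K ℝ := Matrix.of fun z k' => if z.1 = k' then 0 else 1 with hU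
  set Vm : Matrix K (K × W) ℝ := Matrix.of fun k' z => if k' = z.1 then 1 else 0 with hVm
  have hstep1 : (Matrix.of fun z z' : K × W =>
      (if z = z' then t else 0) + (if z.1 = z'.1 then 0 else 1))
      = t • (1 + (t⁻¹ • U) * Vm) := by
    ext z z'
    have hUV : ((t⁻¹ • U) * Vm) z z' = t⁻¹ * (if z.1 = z'.1 then 0 else 1) := by
      simp [Matrix.mul_apply, hU, hVm, ite_mul, mul_ite, Finset.sum_ite_eq]
    simp only [Matrix.of_apply, Matrix.smul_apply, Matrix.add_apply, Matrix.one_apply, hUV,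
      smul_eq_mul]
    by_cases h : z = z' <;> by_cases h2 : z.1 = z'.1 <;>
      simp [h, h2, ht, mul_add, mul_inv_cancel_left₀]
  rw [hstep1, Matrix.det_smul, Matrix.det_one_add_mul_comm]
  have hVU : (1 : Matrix K K ℝ) + Vm * (t⁻¹ • U) = Matrix.of fun p q : K =>
      (if p = q then (1 - t⁻¹ * m) else 0) + t⁻¹ * m := by
    ext p q
    simp only [Matrix.add_apply, Matrix.one_apply, Matrix.mul_apply, Matrix.smul_apply, hU, hVm,
      Matrix.of_apply, smul_eq_mul]
    rw [Fintype.sum_prod_type]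
    have hrw : ∀ x : K,
        (∑ _w : W, ((if p = x then (1:ℝ) else 0) * (t⁻¹ * if x = q then 0 else 1)))
          = if p = x then (if x = q then 0 else (m:ℝ) * t⁻¹) else 0 := by
      intro x
      rw [Finset.sum_const, Finset.card_univ, nsmul_eq_mul, ← hm]
      by_cases h1 : p = x <;> by_cases h2 : x = q <;> simp [h1, h2] <;> ring
    rw [Finset.sum_congr rfl (fun x _ => hrw x), Finset.sum_ite_eq]
    by_cases h : p = q <;> simp [h] <;> ring
  rw [hVU]
  have hone : (1 : ℝ) - t⁻¹ * m ≠ 0 := by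
    intro hcontra
    apply htm
    field_simp at hcontra
    linarith [hcontra]
  rw [det_diag_add_const _ _ hone]
  have hk1 : 1 ≤ k := Fintype.card_pos
  have hm1 : 1 ≤ m := Fintype.card_pos
  have hcardprod : Fintype.card (K × W) = k * m := Fintype.card_prod K W
  rw [hcardprod, ← hk]
  have harith : k * (m - 1) + ((k - 1) + 1) = k * m := by
    rw [Nat.sub_add_cancel hk1, ← Nat.mul_succ, Nat.succ_eq_add_one, Nat.sub_add_cancel hm1]
  have hpow : t ^ (k * m) = t ^ (k * (m - 1)) * t ^ (k - 1) * t := by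
    rw [← harith, pow_add, pow_add, pow_one, mul_assoc]
  rw [hpow]
  have hsub : (1 : ℝ) - t⁻¹ * m = (t - m) / t := by field_simp
  rw [hsub, div_pow]
  have htm' : t - (m:ℝ) ≠ 0 := sub_ne_zero.mpr htm
  field_simp
  ring

lemma eval_charpoly' {T : Type*} [Fintype T] [DecidableEq T] (M : Matrix T T ℝ) (x : ℝ) :
    (M.charpoly).eval x = (x • (1 : Matrix T T ℝ) - M).det := by
  rw [Matrix.charpoly, ← Polynomial.coe_evalRingHom, RingHom.map_det]
  congr 1
  ext i j
  by_cases h : i = j <;>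
    simp [h, Matrix.charmatrix_apply_eq, Matrix.charmatrix_apply_ne, Matrix.one_apply,
      RingHom.mapMatrix_apply]

lemma charpoly_multipartite {K W : Type*} [Fintype K] [DecidableEq K] [Nonempty K]
    [Fintype W] [DecidableEq W] [Nonempty W] :
    (Matrix.of fun z z' : K × W =>
        (if z = z' then ((Fintype.card K : ℝ) - 1) * (Fintype.card W : ℝ) else 0)
          - (if z.1 = z'.1 then 0 else 1)).charpoly
      = X * (X - C (((Fintype.card K : ℝ) - 1) * (Fintype.card W : ℝ)))
            ^ (Fintype.card K * (Fintype.card W - 1))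
          * (X - C ((Fintype.card K : ℝ) * (Fintype.card W : ℝ))) ^ (Fintype.card K - 1) := by
  classical
  set k := Fintype.card K with hk
  set m := Fintype.card W with hm
  set d : ℝ := ((k : ℝ) - 1) * m with hd
  set N : ℝ := (k : ℝ) * m with hN
  apply Polynomial.eq_of_infinite_eval_eq
  apply Set.Infinite.mono (s := ({d, N} : Set ℝ)ᶜ)
  swap
  · exact Set.Finite.infinite_compl ((Set.finite_singleton N).insert d)
  intro x hx
  simp only [Set.mem_compl_iff, Set.mem_insert_iff, Set.mem_singleton_iff, not_or] at hx
  obtain ⟨hxd, hxN⟩ := hx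
  simp only [Set.mem_setOf_eq]
  rw [eval_charpoly']
  have hmat : x • (1 : Matrix (K × W) (K × W) ℝ) -
      (Matrix.of fun z z' : K × W =>
        (if z = z' then d else 0) - (if z.1 = z'.1 then 0 else 1))
      = Matrix.of fun z z' : K × W =>
          (if z = z' then (x - d) else 0) + (if z.1 = z'.1 then 0 else 1) := by
    ext z z'
    by_cases h : z = z' <;> by_cases h2 : z.1 = z'.1 <;>
      simp [h, h2, Matrix.one_apply, Matrix.smul_apply, Matrix.sub_apply]
  rw [hmat, det_multipartite (x - d) (sub_ne_zero.mpr hxd) ?_]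
  · have h1 : x - d - (m : ℝ) = x - N := by rw [hd, hN]; ring
    have h2 : x - d + ((k : ℝ) - 1) * m = x := by rw [hd]; ring
    rw [h1, h2]
    simp only [eval_mul, eval_pow, eval_sub, eval_X, eval_C]
    ring
  · intro hc
    apply hxN
    have : x = d + m := by linarith [sub_eq_iff_eq_add.mp hc]
    rw [this, hd, hN]; ring

end AuxDet

/-- The non-commuting graph of a group `G`: vertices are the non-central elements,
two vertices adjacent iff they do not commute. -/
def nonCommGraph (G : Type*) [Group G] : SimpleGraph {x : G // x ∉ Subgroup.center G} where
  Adj x y := ¬ Commute (x : G) (y : G)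
  symm := ⟨fun _ _ h hc => h hc.symm⟩
  loopless := ⟨fun _ h => h (Commute.refl _)⟩

/-- The Laplacian matrix of the non-commuting graph, over `ℝ`. -/
noncomputable def ncLap (G : Type*) [Group G] [Fintype G] :
    Matrix {x : G // x ∉ Subgroup.center G} {x : G // x ∉ Subgroup.center G} ℝ :=
  letI := Classical.decEq G
  letI : DecidablePred (fun x : G => x ∉ Subgroup.center G) := fun _ => Classical.dec _
  letI : DecidableRel (nonCommGraph G).Adj := fun _ _ => Classical.dec _
  (nonCommGraph G).lapMatrix ℝ

/-- The characteristic polynomial of the Laplacian matrix of the non-commuting graph. -/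
noncomputable def ncCharpoly (G : Type*) [Group G] [Fintype G] : Polynomial ℝ :=
  letI := Classical.decEq G
  letI : DecidablePred (fun x : G => x ∉ Subgroup.center G) := fun _ => Classical.dec _
  (ncLap G).charpoly

/-- The non-commuting graph of `G` is L-integral: every eigenvalue of its Laplacian
matrix is an integer. -/
def ncLIntegral (G : Type*) [Group G] [Fintype G] : Prop :=
  letI := Classical.decEq G
  letI : DecidablePred (fun x : G => x ∉ Subgroup.center G) := fun _ => Classical.dec _
  ∀ μ ∈ spectrum ℝ (ncLap G), ∃ k : ℤ, μ = (k : ℝ)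

/-- Laplacian spectrum of the non-commuting graph of Hanaki's group
`A(n, p)` (the Heisenberg group over `GF(p^n)`), realized as any group `G` whose
elements are parametrized by triples `(a, b, c) ∈ GF(p^n)³` via a bijection `V`
satisfying `V(a, b, c) * V(a', b', c') = V(a + a', b + b' + c·a', c + c')`. -/
theorem laplacian_spectrum_nc_graph_Hanaki_A_n_p
    (p n : ℕ) [Fact p.Prime] (hn : 1 ≤ n) (G : Type*) [Group G] [Fintype G]
    (V : GaloisField p n × GaloisField p n × GaloisField p n ≃ G)
    (hV : ∀ a b c a' b' c' : GaloisField p n,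
      V (a, b, c) * V (a', b', c') = V (a + a', b + b' + c * a', c + c')) :
    ncCharpoly G =
      X *
      (X - C ((p : ℝ) ^ (3 * n) - (p : ℝ) ^ (2 * n))) ^ (p ^ (3 * n) - 2 * p ^ n - 1) *
      (X - C ((p : ℝ) ^ (3 * n) - (p : ℝ) ^ n)) ^ (p ^ n) := by
  classical
  letI : Fintype (GaloisField p n) := Fintype.ofFinite _
  have hq : Fintype.card (GaloisField p n) = p ^ n := by
    rw [← Nat.card_eq_fintype_card]; exact GaloisField.card p n (Nat.one_le_iff_ne_zero.mp hn)
  have hq2 : 2 ≤ p ^ n := by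
    have h2p := (Fact.out : p.Prime).two_le
    calc 2 ≤ p := h2p
    _ = p ^ 1 := (pow_one p).symm
    _ ≤ p ^ n := Nat.pow_le_pow_right (by omega) hn
  -- commuting and center criteria
  have hcomm : ∀ a b c a' b' c' : GaloisField p n,
      (V (a,b,c) * V (a',b',c') = V (a',b',c') * V (a,b,c)) ↔ c * a' = c' * a := by
    intro a b c a' b' c'
    rw [hV, hV, Equiv.apply_eq_iff_eq, Prod.mk.injEq, Prod.mk.injEq]
    constructor
    · rintro ⟨h1, h2, h3⟩; linear_combination h2
    · intro h; exact ⟨by ring, ⟨by linear_combination h, by ring⟩⟩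
  have hcenter : ∀ a b c : GaloisField p n,
      V (a,b,c) ∈ Subgroup.center G ↔ (a = 0 ∧ c = 0) := by
    intro a b c
    rw [Subgroup.mem_center_iff]
    constructor
    · intro h
      have h1 := h (V (1,0,0))
      have h2 := h (V (0,0,1))
      rw [hV, hV, Equiv.apply_eq_iff_eq, Prod.mk.injEq, Prod.mk.injEq] at h1 h2
      obtain ⟨-, e1, -⟩ := h1
      obtain ⟨-, e2, -⟩ := h2
      exact ⟨by linear_combination e2, by linear_combination -e1⟩
    · rintro ⟨rfl, rfl⟩ g
      obtain ⟨⟨a', b', c'⟩, rfl⟩ := V.surjective g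
      rw [hV, hV]
      exact congrArg V (by simp only [Prod.mk.injEq]; exact ⟨by ring, ⟨by ring, by ring⟩⟩)
  -- parametrization of non-central elements
  set f0 : (Option (GaloisField p n)) × ((GaloisField p n)ˣ × GaloisField p n) → GaloisField p n × GaloisField p n × GaloisField p n := fun z =>
    Option.elim z.1 ((0 : GaloisField p n), z.2.2, (z.2.1 : GaloisField p n))
      (fun s => ((z.2.1 : GaloisField p n), z.2.2, (z.2.1 : GaloisField p n) * s)) with hf0
  have hf0nc : ∀ z : (Option (GaloisField p n)) × ((GaloisField p n)ˣ × GaloisField p n), V (f0 z) ∉ Subgroup.center G := by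
    rintro ⟨k, u, b⟩ hctr
    cases k with
    | none =>
      simp only [hf0, Option.elim] at hctr
      rw [hcenter] at hctr
      exact u.ne_zero hctr.2
    | some s =>
      simp only [hf0, Option.elim] at hctr
      rw [hcenter] at hctr
      exact u.ne_zero hctr.1
  set fV : (Option (GaloisField p n)) × ((GaloisField p n)ˣ × GaloisField p n) → {x : G // x ∉ Subgroup.center G} := fun z => ⟨V (f0 z), hf0nc z⟩ with hfV
  have tripleEq : ∀ {x y z x' y' z' : GaloisField p n},
      ((x,y,z) = (x',y',z')) → x = x' ∧ y = y' ∧ z = z' := by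
    intro x y z x' y' z' h
    simpa [Prod.ext_iff] using h
  have hinj : Function.Injective fV := by
    rintro ⟨k, u, b⟩ ⟨k', u', b'⟩ h
    have h' : f0 (k,u,b) = f0 (k',u',b') := V.injective (Subtype.ext_iff.mp h)
    cases k with
    | none =>
      cases k' with
      | none =>
        simp only [hf0, Option.elim] at h'
        obtain ⟨-, h2, h3⟩ := tripleEq h'
        rw [Units.ext h3, h2]
      | some s' =>
        simp only [hf0, Option.elim] at h'
        obtain ⟨h1, -, -⟩ := tripleEq h'
        exact absurd h1.symm u'.ne_zero
    | some s =>
      cases k' with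
      | none =>
        simp only [hf0, Option.elim] at h'
        obtain ⟨h1, -, -⟩ := tripleEq h'
        exact absurd h1 u.ne_zero
      | some s' =>
        simp only [hf0, Option.elim] at h'
        obtain ⟨h1, h2, h3⟩ := tripleEq h'
        have hu : u = u' := Units.ext h1
        subst hu
        have hs : s = s' := mul_left_cancel₀ u.ne_zero h3
        rw [hs, h2]
  have hsurj : Function.Surjective fV := by
    rintro ⟨g, hg⟩
    obtain ⟨⟨a, b, c⟩, rfl⟩ := V.surjective g
    rw [hcenter] at hg
    by_cases ha : a = 0
    · have hc : c ≠ 0 := fun hc => hg ⟨ha, hc⟩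
      refine ⟨(none, (Units.mk0 c hc, b)), ?_⟩
      apply Subtype.ext
      simp only [hfV, hf0, Option.elim, Units.val_mk0]
      rw [ha]
    · refine ⟨(some (a⁻¹ * c), (Units.mk0 a ha, b)), ?_⟩
      apply Subtype.ext
      simp only [hfV, hf0, Option.elim, Units.val_mk0]
      rw [mul_inv_cancel_left₀ ha]
  set φ : (Option (GaloisField p n)) × ((GaloisField p n)ˣ × GaloisField p n) ≃ {x : G // x ∉ Subgroup.center G} := Equiv.ofBijective fV ⟨hinj, hsurj⟩ with hφ
  -- adjacency
  have hadj : ∀ z z' : (Option (GaloisField p n)) × ((GaloisField p n)ˣ × GaloisField p n), (nonCommGraph G).Adj (fV z) (fV z') ↔ z.1 ≠ z'.1 := by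
    rintro ⟨k, u, b⟩ ⟨k', u', b'⟩
    show ¬ (V (f0 (k,u,b)) * V (f0 (k',u',b')) = V (f0 (k',u',b')) * V (f0 (k,u,b))) ↔ _
    simp only [ne_eq]
    rw [not_iff_not]
    cases k with
    | none =>
      cases k' with
      | none =>
        simp only [hf0, Option.elim]
        rw [hcomm]
        simp
      | some s' =>
        simp only [hf0, Option.elim]
        rw [hcomm]
        apply iff_of_false
        · intro h
          simp only [mul_zero] at h
          exact mul_ne_zero u.ne_zero u'.ne_zero h
        · simp
    | some s =>
      cases k' with
      | none =>
        simp only [hf0, Option.elim]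
        rw [hcomm]
        apply iff_of_false
        · intro h
          simp only [mul_zero] at h
          exact mul_ne_zero u'.ne_zero u.ne_zero h.symm
        · simp
      | some s' =>
        simp only [hf0, Option.elim]
        rw [hcomm]
        constructor
        · intro h
          have hs : s = s' := by
            apply mul_left_cancel₀ (mul_ne_zero u.ne_zero u'.ne_zero)
            linear_combination h
          rw [hs]
        · intro h
          have hss : s = s' := by simpa using h
          rw [hss]; ring
  -- cardinalities
  have hcardK : Fintype.card (Option (GaloisField p n)) = p ^ n + 1 := by
    rw [Fintype.card_option, hq]
  have hcardW : Fintype.card ((GaloisField p n)ˣ × GaloisField p n) = (p ^ n - 1) * p ^ n := by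
    rw [Fintype.card_prod, Fintype.card_units, hq]
  -- degree computation
  have hdeg : ∀ (z : (Option (GaloisField p n)) × ((GaloisField p n)ˣ × GaloisField p n))
      (inst : Fintype ((nonCommGraph G).neighborSet (fV z))),
      @SimpleGraph.degree _ (nonCommGraph G) (fV z) inst
      = Fintype.card (Option (GaloisField p n)) * Fintype.card ((GaloisField p n)ˣ × GaloisField p n) - Fintype.card ((GaloisField p n)ˣ × GaloisField p n) := by
    intro z inst
    rw [← SimpleGraph.card_neighborSet_eq_degree]
    have e1 : {z' : (Option (GaloisField p n)) × ((GaloisField p n)ˣ × GaloisField p n) // ¬ (z.1 = z'.1)} ≃ (nonCommGraph G).neighborSet (fV z) :=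
      φ.subtypeEquiv fun z' => by
        rw [SimpleGraph.mem_neighborSet]
        exact (hadj z z').symm
    rw [← Fintype.card_congr e1, Fintype.card_subtype_compl]
    congr 1
    · exact Fintype.card_prod _ _
    · refine Fintype.card_congr ⟨fun z' => z'.1.2, fun w => ⟨(z.1, w), rfl⟩, ?_, fun w => rfl⟩
      rintro ⟨⟨k', w'⟩, h⟩
      cases h
      rfl
  have hdegR : ∀ (z : (Option (GaloisField p n)) × ((GaloisField p n)ˣ × GaloisField p n))
      (inst : Fintype ((nonCommGraph G).neighborSet (fV z))),
      ((@SimpleGraph.degree _ (nonCommGraph G) (fV z) inst : ℕ) : ℝ)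
      = ((Fintype.card (Option (GaloisField p n)) : ℝ) - 1) * (Fintype.card ((GaloisField p n)ˣ × GaloisField p n) : ℝ) := by
    intro z inst
    rw [hdeg z inst, Nat.cast_sub (Nat.le_mul_of_pos_left _ Fintype.card_pos)]
    push_cast
    ring
  -- the explicit matrix
  set L : Matrix ((Option (GaloisField p n)) × ((GaloisField p n)ˣ × GaloisField p n)) ((Option (GaloisField p n)) × ((GaloisField p n)ˣ × GaloisField p n)) ℝ := Matrix.of fun z z' : (Option (GaloisField p n)) × ((GaloisField p n)ˣ × GaloisField p n) =>
    (if z = z' then ((Fintype.card (Option (GaloisField p n)) : ℝ) - 1) * (Fintype.card ((GaloisField p n)ˣ × GaloisField p n) : ℝ) else 0)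
      - (if z.1 = z'.1 then 0 else 1) with hL
  have hEntry : ∀ z z' : (Option (GaloisField p n)) × ((GaloisField p n)ˣ × GaloisField p n), ncLap G (fV z) (fV z') = L z z' := by
    intro z z'
    unfold ncLap
    simp only [SimpleGraph.lapMatrix, SimpleGraph.degMatrix, Matrix.sub_apply,
      Matrix.diagonal_apply, SimpleGraph.adjMatrix_apply, hL, Matrix.of_apply]
    by_cases hzz : z = z'
    · subst hzz
      rw [if_pos rfl, if_pos rfl, if_pos rfl, hdegR z]
      rw [if_neg ((nonCommGraph G).loopless.irrefl (fV z))]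
    · have hfne : fV z ≠ fV z' := fun hc => hzz (hinj hc)
      rw [if_neg hfne, if_neg hzz]
      by_cases h2 : z.1 = z'.1
      · rw [if_pos h2, if_neg (fun hc => ((hadj z z').mp hc) h2)]
      · rw [if_neg h2, if_pos ((hadj z z').mpr h2)]
  have hLap : ncLap G = Matrix.reindex φ φ L := by
    ext v w
    rw [Matrix.reindex_apply, Matrix.submatrix_apply]
    have h := hEntry (φ.symm v) (φ.symm w)
    have h1 : fV (φ.symm v) = v := φ.apply_symm_apply v
    have h2 : fV (φ.symm w) = w := φ.apply_symm_apply w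
    rw [h1, h2] at h
    exact h
  have hchar : ncCharpoly G = L.charpoly := by
    have key : ∀ (i1 : DecidableEq {x : G // x ∉ Subgroup.center G})
        (i2 : Fintype {x : G // x ∉ Subgroup.center G}),
        @Matrix.charpoly ℝ _ _ i1 i2 (ncLap G) = L.charpoly := by
      intro i1 i2
      rw [hLap]
      exact Matrix.charpoly_reindex φ L
    unfold ncCharpoly
    exact key _ _
  -- numeric identities
  have hcast1 : (((p^n - 1) * p^n : ℕ) : ℝ) = ((p:ℝ)^n - 1) * (p:ℝ)^n := by
    rw [Nat.cast_mul, Nat.cast_sub (one_le_two.trans hq2)]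
    push_cast
    ring
  have r1 : (((p^n + 1 : ℕ) : ℝ) - 1) * (((p^n - 1) * p^n : ℕ) : ℝ)
      = (p:ℝ)^(3*n) - (p:ℝ)^(2*n) := by
    rw [hcast1]
    push_cast
    rw [mul_comm 3 n, mul_comm 2 n, pow_mul, pow_mul]
    ring
  have r3 : ((p^n + 1 : ℕ) : ℝ) * (((p^n - 1) * p^n : ℕ) : ℝ)
      = (p:ℝ)^(3*n) - (p:ℝ)^n := by
    rw [hcast1]
    push_cast
    rw [mul_comm 3 n, pow_mul]
    ring
  have hpow3 : p^(3*n) = p^n * p^n * p^n := by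
    rw [show 3*n = n + n + n by ring, pow_add, pow_add]
  have r2 : (p^n + 1) * ((p^n - 1) * p^n - 1) = p^(3*n) - 2 * p^n - 1 := by
    have h1 : 1 ≤ p^n := one_le_two.trans hq2
    have h2 : 1 ≤ (p^n - 1) * p^n := by
      have h0 : 1 ≤ p^n - 1 := Nat.le_sub_of_add_le (by linarith)
      calc 1 = 1 * 1 := rfl
      _ ≤ (p^n - 1) * p^n := Nat.mul_le_mul h0 h1
    have h3 : 2 * p^n ≤ p^(3*n) := by rw [hpow3]; nlinarith [hq2]
    have h4 : 1 ≤ p^(3*n) - 2 * p^n := by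
      have h5 : 1 + 2 * p^n ≤ p^(3*n) := by rw [hpow3]; nlinarith [hq2]
      exact Nat.le_sub_of_add_le h5
    zify [h1, h2, h3, h4]
    rw [show 3*n = n + n + n by ring, pow_add, pow_add]
    ring
  have r4 : p^n + 1 - 1 = p^n := by omega
  rw [hchar, hL, charpoly_multipartite, hcardK, hcardW, r1, r2, r3, r4]
end

section
/- If G is a finite 4-centralizer group, i.e. the set {C_G(x) : x ∈ G} of element centralizers of G has exactly 4 members, then the non-commuting graph 𝒜_G is L-integral. -/
open Polynomial

section GT
variable {G : Type*} [Group G]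

lemma mem_centralizer_self (x : G) : x ∈ Subgroup.centralizer {x} :=
  Subgroup.mem_centralizer_iff.mpr (by simp)

lemma centralizer_ne_top {x : G} (hx : x ∉ Subgroup.center G) :
    Subgroup.centralizer {x} ≠ ⊤ := by
  intro htop
  refine hx (Subgroup.mem_center_iff.mpr fun g => ?_)
  have hg : g ∈ Subgroup.centralizer {x} := htop ▸ Subgroup.mem_top g
  simpa using ((Subgroup.mem_centralizer_iff.mp hg) x rfl).symm

lemma two_subgroup_union (H K : Subgroup G) (hcov : ∀ g : G, g ∈ H ∨ g ∈ K) :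
    H = ⊤ ∨ K = ⊤ := by
  by_cases hHK : ∀ x ∈ H, x ∈ K
  · right
    exact (Subgroup.eq_top_iff' _).mpr fun g => (hcov g).elim (fun h => hHK g h) id
  by_cases hKH : ∀ x ∈ K, x ∈ H
  · left
    exact (Subgroup.eq_top_iff' _).mpr fun g => (hcov g).elim id (fun h => hKH g h)
  push_neg at hHK hKH
  obtain ⟨u, huH, huK⟩ := hHK
  obtain ⟨v, hvK, hvH⟩ := hKH
  rcases hcov (u * v) with h | h
  · exact absurd (by simpa using mul_mem (inv_mem huH) h) hvH
  · exact absurd (by simpa using mul_mem h (inv_mem hvK)) huK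

lemma exists_not_mem_two (A B C : Subgroup G) (hB : B ≠ ⊤) (hC : C ≠ ⊤)
    (hcov : ∀ g : G, g ∈ A ∨ g ∈ B ∨ g ∈ C) :
    ∃ a, a ∈ A ∧ a ∉ B ∧ a ∉ C := by
  by_contra hcon
  push_neg at hcon
  have hcov2 : ∀ g : G, g ∈ B ∨ g ∈ C := by
    intro g
    rcases hcov g with h | h | h
    · by_cases hb : g ∈ B
      · exact Or.inl hb
      · exact Or.inr (hcon g h hb)
    · exact Or.inl h
    · exact Or.inr h
  rcases two_subgroup_union B C hcov2 with h | h
  · exact hB h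
  · exact hC h

lemma inter_sub (A B C : Subgroup G) (a : G) (haA : a ∈ A) (haB : a ∉ B) (haC : a ∉ C)
    (hcov : ∀ g : G, g ∈ A ∨ g ∈ B ∨ g ∈ C) :
    ∀ x, x ∈ B → x ∈ C → x ∈ A := by
  intro x hxB hxC
  by_contra hxA
  rcases hcov (a * x) with h | h | h
  · exact hxA (by simpa using mul_mem (inv_mem haA) h)
  · exact haB (by simpa using mul_mem h (inv_mem hxB))
  · exact haC (by simpa using mul_mem h (inv_mem hxC))

lemma cent_eq_of_commute [Finite G]
    (h : Set.ncard {H : Subgroup G | ∃ x : G, H = Subgroup.centralizer {x}} = 4) :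
    ∀ x y : G, x ∉ Subgroup.center G → y ∉ Subgroup.center G → Commute x y →
      Subgroup.centralizer {x} = Subgroup.centralizer {y} := by
  set S : Set (Subgroup G) := {H : Subgroup G | ∃ x : G, H = Subgroup.centralizer {x}} with hS
  have htopS : (⊤ : Subgroup G) ∈ S := by
    refine ⟨1, ?_⟩
    refine ((Subgroup.eq_top_iff' _).mpr fun g => Subgroup.mem_centralizer_iff.mpr ?_).symm
    simp
  have hT : (S \ {⊤}).ncard = 3 := by
    rw [Set.ncard_diff_singleton_of_mem htopS, h]
  obtain ⟨C1, C2, C3, h12, h13, h23, hTeq⟩ := Set.ncard_eq_three.mp hT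
  -- memberships
  have hC1 : C1 ∈ S \ {⊤} := by rw [hTeq]; simp
  have hC2 : C2 ∈ S \ {⊤} := by rw [hTeq]; simp
  have hC3 : C3 ∈ S \ {⊤} := by rw [hTeq]; simp
  -- center is inside each
  have hZle : ∀ {C : Subgroup G}, C ∈ S \ {⊤} → Subgroup.center G ≤ C := by
    rintro C ⟨⟨x, rfl⟩, -⟩
    exact Subgroup.center_le_centralizer _
  -- centralizer of a noncentral element is one of C1, C2, C3
  have hcent : ∀ {x : G}, x ∉ Subgroup.center G →
      Subgroup.centralizer {x} = C1 ∨ Subgroup.centralizer {x} = C2 ∨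
        Subgroup.centralizer {x} = C3 := by
    intro x hx
    have hmem : Subgroup.centralizer {x} ∈ S \ {⊤} :=
      ⟨⟨x, rfl⟩, centralizer_ne_top hx⟩
    rw [hTeq] at hmem
    simpa using hmem
  -- coverage
  have hcov : ∀ g : G, g ∈ C1 ∨ g ∈ C2 ∨ g ∈ C3 := by
    intro g
    by_cases hg : g ∈ Subgroup.center G
    · exact Or.inl (hZle hC1 hg)
    · rcases hcent hg with hc | hc | hc
      · exact Or.inl (hc ▸ mem_centralizer_self g)
      · exact Or.inr (Or.inl (hc ▸ mem_centralizer_self g))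
      · exact Or.inr (Or.inr (hc ▸ mem_centralizer_self g))
  have hcov2 : ∀ g : G, g ∈ C2 ∨ g ∈ C1 ∨ g ∈ C3 := fun g => by have := hcov g; tauto
  have hcov3 : ∀ g : G, g ∈ C3 ∨ g ∈ C1 ∨ g ∈ C2 := fun g => by have := hcov g; tauto
  have hC1ne := hC1.2; have hC2ne := hC2.2; have hC3ne := hC3.2
  simp only [Set.mem_singleton_iff] at hC1ne hC2ne hC3ne
  obtain ⟨a1, ha1A, ha1B, ha1C⟩ := exists_not_mem_two C1 C2 C3 hC2ne hC3ne hcov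
  obtain ⟨a2, ha2A, ha2B, ha2C⟩ := exists_not_mem_two C2 C1 C3 hC1ne hC3ne hcov2
  obtain ⟨a3, ha3A, ha3B, ha3C⟩ := exists_not_mem_two C3 C1 C2 hC1ne hC2ne hcov3
  -- each a_i is noncentral and its centralizer is C_i
  have hanc : ∀ {a : G}, a ∉ C2 → a ∉ Subgroup.center G := fun ha h => ha (hZle hC2 h)
  have hanc' : ∀ {a : G}, a ∉ C1 → a ∉ Subgroup.center G := fun ha h => ha (hZle hC1 h)
  have hca1 : Subgroup.centralizer {a1} = C1 := by
    rcases hcent (hanc ha1B) with hc | hc | hc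
    · exact hc
    · exact absurd (hc ▸ mem_centralizer_self a1) ha1B
    · exact absurd (hc ▸ mem_centralizer_self a1) ha1C
  have hca2 : Subgroup.centralizer {a2} = C2 := by
    rcases hcent (hanc' ha2B) with hc | hc | hc
    · exact absurd (hc ▸ mem_centralizer_self a2) ha2B
    · exact hc
    · exact absurd (hc ▸ mem_centralizer_self a2) ha2C
  have hca3 : Subgroup.centralizer {a3} = C3 := by
    rcases hcent (hanc' ha3B) with hc | hc | hc
    · exact absurd (hc ▸ mem_centralizer_self a3) ha3B
    · exact absurd (hc ▸ mem_centralizer_self a3) ha3C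
    · exact hc
  -- pairwise intersections lie in the third
  have hi1 := inter_sub C1 C2 C3 a1 ha1A ha1B ha1C hcov
  have hi2 := inter_sub C2 C1 C3 a2 ha2A ha2B ha2C hcov2
  have hi3 := inter_sub C3 C1 C2 a3 ha3A ha3B ha3C hcov3
  -- an element of two distinct C_i's is central
  have hkey : ∀ x : G, x ∈ C1 → x ∈ C2 → x ∈ C3 → x ∈ Subgroup.center G := by
    intro x hx1 hx2 hx3
    by_contra hx
    have hcomm : ∀ {a : G} {C : Subgroup G}, Subgroup.centralizer {a} = C → x ∈ C →
        a ∈ Subgroup.centralizer {x} := by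
      rintro a C rfl hxC
      refine Subgroup.mem_centralizer_iff.mpr ?_
      rintro h rfl
      exact ((Subgroup.mem_centralizer_iff.mp hxC) a rfl).symm
    have hA1 := hcomm hca1 hx1
    have hA2 := hcomm hca2 hx2
    have hA3 := hcomm hca3 hx3
    rcases hcent hx with hc | hc | hc
    · rw [hc] at hA2; exact ha2B hA2
    · rw [hc] at hA1; exact ha1B hA1
    · rw [hc] at hA1; exact ha1C hA1
  have hpair : ∀ x : G, ((x ∈ C1 ∧ x ∈ C2) ∨ (x ∈ C1 ∧ x ∈ C3) ∨ (x ∈ C2 ∧ x ∈ C3)) →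
      x ∈ Subgroup.center G := by
    rintro x (⟨h1, h2⟩ | ⟨h1, h3⟩ | ⟨h2, h3⟩)
    · exact hkey x h1 h2 (hi3 x h1 h2)
    · exact hkey x h1 (hi2 x h1 h3) h3
    · exact hkey x (hi1 x h2 h3) h2 h3
  -- conclusion
  intro x y hx hy hxy
  have hxinY : x ∈ Subgroup.centralizer {y} := by
    refine Subgroup.mem_centralizer_iff.mpr ?_
    rintro h rfl
    exact hxy.symm
  have hxinX : x ∈ Subgroup.centralizer {x} := mem_centralizer_self x
  by_contra hne
  rcases hcent hx with hcx | hcx | hcx <;> rcases hcent hy with hcy | hcy | hcy <;>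
    first
      | (exact hne (hcx.trans hcy.symm))
      | (exact hx (hpair x (by rw [hcx] at hxinX; rw [hcy] at hxinY; tauto)))
end GT

lemma ncLIntegral_of_trans (G : Type*) [Group G] [Fintype G]
    (htr : ∀ x y z : G, x ∉ Subgroup.center G → y ∉ Subgroup.center G →
      z ∉ Subgroup.center G → Commute x y → Commute y z → Commute x z) :
    ncLIntegral G := by
  letI := Classical.decEq G
  letI : DecidablePred (fun x : G => x ∉ Subgroup.center G) := fun _ => Classical.dec _
  letI : DecidableRel (nonCommGraph G).Adj := fun _ _ => Classical.dec _
  letI : ∀ a b : G, Decidable (Commute a b) := fun _ _ => Classical.dec _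
  show ∀ μ ∈ spectrum ℝ (ncLap G), ∃ k : ℤ, μ = (k : ℝ)
  -- setup
  set V := {x : G // x ∉ Subgroup.center G} with hV
  let m : V → ℕ := fun x => (Finset.univ.filter fun z : V => Commute (x : G) (z : G)).card
  set N : ℕ := Fintype.card V with hN
  let J : Matrix V V ℝ := Matrix.of fun _ _ => 1
  let B : Matrix V V ℝ := Matrix.of fun x y => if Commute (x : G) (y : G) then 1 else 0
  let Md : Matrix V V ℝ := Matrix.diagonal fun x => (m x : ℝ)
  let c : Matrix V V ℝ := Md - B
  have htr' : ∀ x y z : V, Commute (x : G) (y : G) → Commute (y : G) (z : G) →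
      Commute (x : G) (z : G) := fun x y z => htr x y z x.2 y.2 z.2
  have hmcol : ∀ y : V, (Finset.univ.filter fun z : V => Commute (z : G) (y : G)).card = m y := by
    intro y
    refine congrArg Finset.card (Finset.filter_congr fun z _ => ?_)
    exact ⟨Commute.symm, Commute.symm⟩
  have hm_eq : ∀ x y : V, Commute (x : G) (y : G) → m x = m y := by
    intro x y hxy
    refine congrArg Finset.card (Finset.filter_congr fun z _ => ?_)
    exact ⟨fun h => htr' y x z hxy.symm h, fun h => htr' x y z hxy h⟩
  -- matrix identities
  have hBB : B * B = B * Md := by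
    ext x y
    rw [Matrix.mul_apply, Matrix.mul_diagonal]
    have hterm : ∀ z : V, B x z * B z y =
        if Commute (x : G) (z : G) ∧ Commute (z : G) (y : G) then (1:ℝ) else 0 := by
      intro z
      by_cases h1 : Commute (x : G) (z : G) <;> by_cases h2 : Commute (z : G) (y : G) <;>
        simp [B, h1, h2]
    rw [Finset.sum_congr rfl fun z _ => hterm z, Finset.sum_boole]
    by_cases hxy : Commute (x : G) (y : G)
    · have heq : (Finset.univ.filter fun z : V =>
          Commute (x : G) (z : G) ∧ Commute (z : G) (y : G)) =
          Finset.univ.filter fun z : V => Commute (z : G) (y : G) := by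
        refine Finset.filter_congr fun z _ => ?_
        exact ⟨fun h => h.2, fun h => ⟨htr' x y z hxy h.symm, h⟩⟩
      rw [heq, hmcol y]
      simp [B, hxy]
    · have heq : (Finset.univ.filter fun z : V =>
          Commute (x : G) (z : G) ∧ Commute (z : G) (y : G)) = ∅ := by
        refine Finset.filter_false_of_mem fun z _ hc => hxy (htr' x z y hc.1 hc.2)
      rw [heq]
      simp [B, hxy]
  have hMdB : Md * B = B * Md := by
    ext x y
    rw [Matrix.diagonal_mul, Matrix.mul_diagonal]
    by_cases hxy : Commute (x : G) (y : G)
    · simp [B, hxy, hm_eq x y hxy, mul_comm]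
    · simp [B, hxy]
  have hBJ : B * J = Md * J := by
    ext x y
    rw [Matrix.mul_apply, Matrix.diagonal_mul]
    simp [B, J, Finset.sum_boole, m]
  have hJB : J * B = J * Md := by
    ext x y
    rw [Matrix.mul_apply, Matrix.mul_diagonal]
    simp [B, J, Finset.sum_boole, hmcol y]
  have hcJ : c * J = 0 := by
    simp only [c, Matrix.sub_mul, hBJ, sub_self]
  have hJc : J * c = 0 := by
    simp only [c, Matrix.mul_sub, hJB, sub_self]
  have hJJ : J * J = (N : ℝ) • J := by
    ext x y
    rw [Matrix.mul_apply, Matrix.smul_apply]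
    simp only [J, Matrix.of_apply, mul_one, smul_eq_mul]
    rw [Finset.sum_const, nsmul_eq_mul, mul_one, hN, Fintype.card]
  have hcc : c * c = c * Md := by
    show (Md - B) * (Md - B) = (Md - B) * Md
    rw [Matrix.sub_mul, Matrix.mul_sub, Matrix.mul_sub, hBB, hMdB, Matrix.sub_mul]
    abel
  -- the Laplacian in terms of J and c
  set L := ncLap G with hLdef
  have hle : ∀ x : V, m x ≤ N := fun x => by
    rw [hN]; exact le_trans (Finset.card_filter_le _ _) (le_of_eq rfl)
  have hL : L = (N : ℝ) • (1 : Matrix V V ℝ) - J - c := by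
    ext x y
    have hrhs : ((N : ℝ) • (1 : Matrix V V ℝ) - J - c) x y
        = (N : ℝ) * (if x = y then 1 else 0) - 1 -
          ((if x = y then (m x : ℝ) else 0) - (if Commute (x : G) (y : G) then 1 else 0)) := by
      simp [J, B, Md, c, Matrix.sub_apply, Matrix.smul_apply, Matrix.one_apply,
        Matrix.diagonal_apply, smul_eq_mul]
    have hlhs : L x y = (if x = y then ((nonCommGraph G).degree x : ℝ) else 0)
        - (if (nonCommGraph G).Adj x y then 1 else 0) := by
      show ((nonCommGraph G).lapMatrix ℝ) x y = _
      rw [SimpleGraph.lapMatrix, Matrix.sub_apply, SimpleGraph.degMatrix,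
        Matrix.diagonal_apply, SimpleGraph.adjMatrix_apply]
    rw [hlhs, hrhs]
    by_cases hxy : x = y
    · subst hxy
      have hadj : ¬ (nonCommGraph G).Adj x x := (nonCommGraph G).loopless.irrefl x
      have hdeg : (nonCommGraph G).degree x = N - m x := by
        rw [← SimpleGraph.card_neighborFinset_eq_degree,
          SimpleGraph.neighborFinset_eq_filter]
        have heq : (Finset.univ.filter fun z : V => (nonCommGraph G).Adj x z) =
            Finset.univ.filter fun z : V => ¬ Commute (x : G) (z : G) :=
          Finset.filter_congr fun z _ => Iff.rfl
        rw [heq, Finset.filter_not, Finset.card_sdiff_of_subset (Finset.filter_subset _ _)]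
        rfl
      rw [if_pos rfl, if_pos rfl, if_pos rfl, if_neg hadj,
        if_pos (Commute.refl (x : G)), hdeg]
      push_cast [hle x]
      ring
    · have hne : ¬ (x : G) = (y : G) := fun h => hxy (Subtype.ext h)
      rw [if_neg hxy, if_neg hxy, if_neg hxy]
      by_cases hc : Commute (x : G) (y : G)
      · rw [if_pos hc, if_neg (fun h : (nonCommGraph G).Adj x y => h hc)]
        ring
      · rw [if_neg hc, if_pos (show (nonCommGraph G).Adj x y from hc)]
        ring
  -- basic consequences
  have hLJ : L * J = 0 := by
    rw [hL, Matrix.sub_mul, Matrix.sub_mul, Matrix.smul_mul, one_mul, hJJ, hcJ]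
    abel
  have hLsub : L - (N : ℝ) • 1 = -(J + c) := by rw [hL]; abel
  have hcL : c * L = ((N : ℝ) • 1 - c) * c := by
    have h1 : c * L = (N : ℝ) • c - 0 - c * c := by
      rw [hL, Matrix.mul_sub, Matrix.mul_sub, hcJ, Matrix.mul_smul, mul_one]
    have h2 : ((N : ℝ) • 1 - c) * c = (N : ℝ) • c - c * c := by
      rw [Matrix.sub_mul, Matrix.smul_mul, one_mul]
    rw [h1, h2]
    abel
  -- powers
  have hcLpow : ∀ n : ℕ, c * L ^ n = ((N : ℝ) • 1 - c) ^ n * c := by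
    intro n
    induction n with
    | zero => simp
    | succ n ih =>
      rw [pow_succ, ← mul_assoc, ih, mul_assoc, hcL, ← mul_assoc, ← pow_succ, pow_succ']
  have hcaeval : ∀ p : ℝ[X], c * (aeval L p) = aeval ((N : ℝ) • 1 - c) p * c := by
    intro p
    induction p using Polynomial.induction_on' with
    | add p q hp hq => rw [map_add, map_add, Matrix.mul_add, Matrix.add_mul, hp, hq]
    | monomial n a =>
      simp only [aeval_monomial, ← Algebra.smul_def, Matrix.mul_smul, Matrix.smul_mul,
        hcLpow n]
  have hccpow : ∀ (n : ℕ) (x y : V), (c ^ n * c) x y = (m y : ℝ) ^ n * c x y := by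
    intro n
    induction n with
    | zero => intro x y; simp
    | succ n ih =>
      intro x y
      have hstep : c ^ (n + 1) * c = (c ^ n * c) * Md := by
        rw [pow_succ, mul_assoc, hcc, ← mul_assoc]
      rw [hstep, Matrix.mul_diagonal, ih, pow_succ]
      ring
  have haeval : ∀ (p : ℝ[X]) (x y : V),
      ((aeval c p) * c) x y = p.eval (m y : ℝ) * c x y := by
    intro p
    induction p using Polynomial.induction_on' with
    | add p q hp hq =>
      intro x y
      rw [map_add, Matrix.add_mul, Matrix.add_apply, hp, hq, eval_add]
      ring
    | monomial n a =>
      intro x y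
      rw [aeval_monomial, ← Algebra.smul_def, Matrix.smul_mul, Matrix.smul_apply,
        hccpow n, eval_monomial, smul_eq_mul]
      ring
  set W : Finset ℝ := Finset.univ.image fun x : V => (m x : ℝ) with hW
  set F : ℝ[X] := ∏ w ∈ W, (Polynomial.C w - Polynomial.X) with hF
  have hFeval : ∀ y : V, F.eval (m y : ℝ) = 0 := by
    intro y
    rw [hF, eval_prod]
    exact Finset.prod_eq_zero (Finset.mem_image_of_mem _ (Finset.mem_univ y)) (by simp)
  have hFc : (aeval c F) * c = 0 := by
    ext x y
    rw [haeval, hFeval y, zero_mul, Matrix.zero_apply]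
  set F' : ℝ[X] := F.comp (Polynomial.C (N : ℝ) - Polynomial.X) with hF'
  set q : ℝ[X] := Polynomial.X * ((Polynomial.X - Polynomial.C (N : ℝ)) * F') with hq
  have hq0 : aeval L q = 0 := by
    have e1 : aeval L q = L * ((L - (N : ℝ) • 1) * aeval L F') := by
      rw [hq, map_mul, map_mul, aeval_X, map_sub, aeval_X, aeval_C,
        Algebra.algebraMap_eq_smul_one]
    have e3 : c * aeval L F' = aeval c F * c := by
      rw [hcaeval]
      congr 1
      rw [hF', aeval_comp, map_sub, aeval_X, aeval_C, Algebra.algebraMap_eq_smul_one,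
        sub_sub_cancel]
    have e2 : -(J + c) * aeval L F' = -(J * aeval L F') - aeval c F * c := by
      rw [Matrix.neg_mul, Matrix.add_mul, ← e3]
      abel
    rw [e1, hLsub, e2, hFc, sub_zero, Matrix.mul_neg, ← Matrix.mul_assoc, hLJ,
      Matrix.zero_mul, neg_zero]
  -- spectral mapping
  intro mu hmu
  have hmem : q.eval mu ∈ spectrum ℝ (aeval L q) :=
    spectrum.subset_polynomial_aeval L q ⟨mu, hmu, rfl⟩
  rw [hq0] at hmem
  have h0 : q.eval mu = 0 := by
    by_contra hne
    have hunit : IsUnit ((algebraMap ℝ (Matrix V V ℝ)) (q.eval mu) - 0) := by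
      rw [sub_zero]
      exact IsUnit.map (algebraMap ℝ (Matrix V V ℝ)) (isUnit_iff_ne_zero.mpr hne)
    exact (spectrum.mem_iff.mp hmem) hunit
  have hprod : mu * ((mu - (N : ℝ)) * F.eval ((N : ℝ) - mu)) = 0 := by
    rw [hq, eval_mul, eval_mul, eval_X, eval_sub, eval_X, eval_C, hF', eval_comp,
      eval_sub, eval_C, eval_X] at h0
    exact h0
  rcases mul_eq_zero.mp hprod with h | h
  · exact ⟨0, by simp [h]⟩
  rcases mul_eq_zero.mp h with h | h
  · exact ⟨(N : ℤ), by push_cast; linarith⟩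
  · rw [hF, eval_prod] at h
    obtain ⟨w, hwW, hw⟩ := Finset.prod_eq_zero_iff.mp h
    rw [eval_sub, eval_C, eval_X] at hw
    obtain ⟨x, -, rfl⟩ := Finset.mem_image.mp hwW
    refine ⟨(N : ℤ) - (m x : ℤ), ?_⟩
    push_cast
    linarith

/-- The non-commuting graph of a finite `4`-centralizer group is
L-integral. -/
theorem nc_graph_LIntegral_of_four_centralizer
    (G : Type*) [Group G] [Fintype G]
    (h : Set.ncard {H : Subgroup G | ∃ x : G, H = Subgroup.centralizer {x}} = 4) :
    ncLIntegral G := by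
  have htr : ∀ x y z : G, x ∉ Subgroup.center G → y ∉ Subgroup.center G →
      z ∉ Subgroup.center G → Commute x y → Commute y z → Commute x z := by
    intro x y z hx hy hz hxy hyz
    have h1 := cent_eq_of_commute h x y hx hy hxy
    have h2 := cent_eq_of_commute h y z hy hz hyz
    have hz' : z ∈ Subgroup.centralizer {x} := (h1.trans h2) ▸ mem_centralizer_self z
    exact (Subgroup.mem_centralizer_iff.mp hz') x rfl
  exact ncLIntegral_of_trans G htr
end

section
/- If G is a finite 5-centralizer group, i.e. the set {C_G(x) : x ∈ G} of element centralizers of G has exactly 5 members, then the non-commuting graph 𝒜_G is L-integral. -/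
open Polynomial

open Subgroup in
lemma five_centralizer_CA (G : Type*) [Group G] [Fintype G]
    (h : Set.ncard {H : Subgroup G | ∃ x : G, H = Subgroup.centralizer {x}} = 5)
    {a b c : G} (ha : a ∉ center G) (hb : b ∉ center G) (hc : c ∉ center G)
    (hab : Commute a b) (hbc : Commute b c) : Commute a c := by
  classical
  by_contra hac
  have hca : ¬ Commute c a := fun h' => hac h'.symm
  set S : Set (Subgroup G) := {H : Subgroup G | ∃ x : G, H = Subgroup.centralizer {x}} with hS
  -- centralizer of 1 is ⊤
  have htop : Subgroup.centralizer ({1} : Set G) = ⊤ := by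
    ext g; simp [Subgroup.mem_centralizer_singleton_iff]
  set Ca := Subgroup.centralizer ({a} : Set G) with hCa
  set Cb := Subgroup.centralizer ({b} : Set G) with hCb
  set Cc := Subgroup.centralizer ({c} : Set G) with hCc
  set Cd := Subgroup.centralizer ({a * c} : Set G) with hCd
  -- noncentral => proper
  have hproper : ∀ x : G, x ∉ center G → Subgroup.centralizer ({x} : Set G) ≠ ⊤ := by
    intro x hx heq
    apply hx
    rw [Subgroup.mem_center_iff]
    intro g
    have hg : g ∈ Subgroup.centralizer ({x} : Set G) := heq ▸ Subgroup.mem_top g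
    exact Subgroup.mem_centralizer_singleton_iff.mp hg
  -- a*c noncentral
  have hdnc : a * c ∉ center G := by
    intro hz
    have hz' : a * (a * c) = a * c * a := Subgroup.mem_center_iff.mp hz a
    exact hac (mul_left_cancel (hz'.trans (mul_assoc a c a)))
  -- memberships
  have haCa : a ∈ Ca := Subgroup.mem_centralizer_singleton_iff.mpr rfl
  have hcCc : c ∈ Cc := Subgroup.mem_centralizer_singleton_iff.mpr rfl
  have haCb : a ∈ Cb := Subgroup.mem_centralizer_singleton_iff.mpr hab.eq
  have hcCb : c ∈ Cb := Subgroup.mem_centralizer_singleton_iff.mpr hbc.symm.eq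
  have haCc : a ∉ Cc := fun hm => hac (Subgroup.mem_centralizer_singleton_iff.mp hm)
  have hcCa : c ∉ Ca := fun hm => hca (Subgroup.mem_centralizer_singleton_iff.mp hm)
  have haCd : a ∉ Cd := by
    intro hm
    have hm' : a * (a * c) = a * c * a := Subgroup.mem_centralizer_singleton_iff.mp hm
    exact hac (mul_left_cancel (hm'.trans (mul_assoc a c a)))
  have hcCd : c ∉ Cd := by
    intro hm
    have hm' : c * (a * c) = a * c * c := Subgroup.mem_centralizer_singleton_iff.mp hm
    exact hac (mul_right_cancel (hm'.symm.trans (mul_assoc c a c).symm))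
  have hbCd : b ∈ Cd := Subgroup.mem_centralizer_singleton_iff.mpr ((hab.symm.mul_right hbc).eq)
  have hbCa : b ∈ Ca := Subgroup.mem_centralizer_singleton_iff.mpr hab.symm.eq
  have hbCb : b ∈ Cb := Subgroup.mem_centralizer_singleton_iff.mpr rfl
  have hbCc : b ∈ Cc := Subgroup.mem_centralizer_singleton_iff.mpr hbc.eq
  -- distinctness
  have hTa : (⊤ : Subgroup G) ≠ Ca := fun e => hproper a ha e.symm
  have hTb : (⊤ : Subgroup G) ≠ Cb := fun e => hproper b hb e.symm
  have hTc : (⊤ : Subgroup G) ≠ Cc := fun e => hproper c hc e.symm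
  have hTd : (⊤ : Subgroup G) ≠ Cd := fun e => hproper (a * c) hdnc e.symm
  have hab' : Ca ≠ Cb := fun e => hcCa (e ▸ hcCb)
  have hac' : Ca ≠ Cc := fun e => haCc (e ▸ haCa)
  have had' : Ca ≠ Cd := fun e => haCd (e ▸ haCa)
  have hbc' : Cb ≠ Cc := fun e => haCc (e ▸ haCb)
  have hbd' : Cb ≠ Cd := fun e => haCd (e ▸ haCb)
  have hcd' : Cc ≠ Cd := fun e => hcCd (e ▸ hcCc)
  set F : Finset (Subgroup G) := {⊤, Ca, Cb, Cc, Cd} with hF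
  have hFcard : F.card = 5 := by
    rw [hF]
    rw [Finset.card_insert_of_notMem (by simp [hTa, hTb, hTc, hTd])]
    rw [Finset.card_insert_of_notMem (by simp [hab', hac', had'])]
    rw [Finset.card_insert_of_notMem (by simp [hbc', hbd'])]
    rw [Finset.card_insert_of_notMem (by simp [hcd'])]
    simp
  have hFS : (↑F : Set (Subgroup G)) ⊆ S := by
    intro H hH
    simp only [hF, Finset.coe_insert, Set.mem_insert_iff, Finset.coe_singleton,
      Set.mem_singleton_iff] at hH
    rcases hH with rfl | rfl | rfl | rfl | rfl
    · exact ⟨1, htop.symm⟩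
    · exact ⟨a, rfl⟩
    · exact ⟨b, rfl⟩
    · exact ⟨c, rfl⟩
    · exact ⟨a * c, rfl⟩
  have hSfin : S.Finite := by
    have : S = Set.range (fun x : G => Subgroup.centralizer ({x} : Set G)) := by
      ext H; simp [hS, Set.mem_range, eq_comm]
    rw [this]; exact Set.finite_range _
  have hFeq : (↑F : Set (Subgroup G)) = S :=
    Set.eq_of_subset_of_ncard_le hFS (by rw [h, Set.ncard_coe_finset, hFcard]) hSfin
  -- b is central: contradiction
  apply hb
  rw [Subgroup.mem_center_iff]
  intro g
  have hg : Subgroup.centralizer ({g} : Set G) ∈ (↑F : Set (Subgroup G)) := by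
    rw [hFeq]; exact ⟨g, rfl⟩
  have hbg : b ∈ Subgroup.centralizer ({g} : Set G) := by
    simp only [hF, Finset.coe_insert, Set.mem_insert_iff, Finset.coe_singleton,
      Set.mem_singleton_iff] at hg
    rcases hg with e | e | e | e | e <;> rw [e]
    · exact Subgroup.mem_top b
    · exact hbCa
    · exact hbCb
    · exact hbCc
    · exact hbCd
  exact (Subgroup.mem_centralizer_singleton_iff.mp hbg).symm


lemma lap_eigen_int {V : Type*} [Fintype V] [DecidableEq V] (g : SimpleGraph V)
    [DecidableRel g.Adj]
    (htrans : ∀ x y z : V, ¬g.Adj x y → ¬g.Adj y z → ¬g.Adj x z)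
    (μ : ℝ) (hμ : μ ∈ spectrum ℝ (g.lapMatrix ℝ)) : ∃ k : ℤ, μ = (k : ℝ) := by
  classical
  rw [spectrum.mem_iff] at hμ
  have hdet : (algebraMap ℝ (Matrix V V ℝ) μ - g.lapMatrix ℝ).det = 0 := by
    by_contra hne
    exact hμ ((Matrix.isUnit_iff_isUnit_det _).mpr (isUnit_iff_ne_zero.mpr hne))
  obtain ⟨v, hv0, hveq⟩ := Matrix.exists_mulVec_eq_zero_iff.mpr hdet
  have heig : ∀ x, μ * v x =
      (g.degree x : ℝ) * v x - ∑ y ∈ Finset.univ.filter (g.Adj x), v y := by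
    intro x
    have h1 := congrFun hveq x
    rw [Matrix.sub_mulVec] at h1
    simp only [Pi.sub_apply, Algebra.algebraMap_eq_smul_one, Matrix.smul_mulVec,
      Matrix.one_mulVec, Pi.smul_apply, smul_eq_mul, Pi.zero_apply, sub_eq_zero] at h1
    rw [h1, SimpleGraph.lapMatrix_mulVec_apply, SimpleGraph.neighborFinset_eq_filter]
  set n := Fintype.card V with hn
  set W : V → Finset V := fun x => Finset.univ.filter (fun y => ¬ g.Adj x y) with hW
  set S := ∑ y, v y with hS
  have hdegW : ∀ x, g.degree x + (W x).card = n := by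
    intro x
    rw [SimpleGraph.degree, SimpleGraph.neighborFinset_eq_filter, hW]
    exact Finset.card_filter_add_card_filter_not _
  have hsumW : ∀ x, ∑ y ∈ Finset.univ.filter (g.Adj x), v y + ∑ y ∈ W x, v y = S :=
    fun x => Finset.sum_filter_add_sum_filter_not _ _ _
  by_cases hA : ∃ x y, ¬g.Adj x y ∧ v x ≠ v y
  · obtain ⟨x, y, hxy, hvne⟩ := hA
    have hyx : ¬g.Adj y x := fun hadj => hxy hadj.symm
    have hWxy : W x = W y := by
      ext z
      simp only [hW, Finset.mem_filter, Finset.mem_univ, true_and]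
      exact ⟨fun hz => htrans y x z hyx hz, fun hz => htrans x y z hxy hz⟩
    have hdeg : g.degree x = g.degree y := by
      have c1 := hdegW x
      have c2 := hdegW y
      rw [hWxy] at c1
      omega
    have hsum : ∑ z ∈ Finset.univ.filter (g.Adj x), v z
        = ∑ z ∈ Finset.univ.filter (g.Adj y), v z := by
      have t1 := hsumW x
      have t2 := hsumW y
      rw [hWxy] at t1
      linarith
    refine ⟨(g.degree x : ℤ), ?_⟩
    have e1 := heig x
    have e2 := heig y
    rw [← hdeg, ← hsum] at e2
    have key : (μ - (g.degree x : ℝ)) * (v x - v y) = 0 := by ring_nf; linarith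
    have := mul_eq_zero.mp key
    rcases this with h0 | h0
    · push_cast
      linarith [sub_eq_zero.mp h0]
    · exact absurd (sub_eq_zero.mp h0) hvne
  · push_neg at hA
    obtain ⟨x0, hx0⟩ := Function.ne_iff.mp hv0
    have hx0' : v x0 ≠ 0 := hx0
    have hx : ∀ x, μ * v x = (n : ℝ) * v x - S := by
      intro x
      have e := heig x
      have hT : ∑ y ∈ W x, v y = ((W x).card : ℝ) * v x := by
        rw [Finset.sum_congr rfl (fun z hz => ?_), Finset.sum_const, nsmul_eq_mul]
        exact (hA x z (by simpa [hW] using hz)).symm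
      have hd : (g.degree x : ℝ) = (n : ℝ) - ((W x).card : ℝ) := by
        have := hdegW x
        push_cast [← this]
        ring
      have hs := hsumW x
      rw [hT] at hs
      rw [hd] at e
      linarith [e, hs]
    by_cases hμn : μ = (n : ℝ)
    · exact ⟨(n : ℤ), by push_cast [hμn]; ring⟩
    · have hconst : ∀ x, v x = v x0 := by
        intro x
        have e1 := hx x
        have e2 := hx x0
        have key : (μ - (n : ℝ)) * (v x - v x0) = 0 := by ring_nf; linarith
        rcases mul_eq_zero.mp key with h0 | h0
        · exact absurd (sub_eq_zero.mp h0) (fun hh => hμn (by linarith [sub_eq_zero.mp h0]))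
        · exact sub_eq_zero.mp h0
      have hSn : S = (n : ℝ) * v x0 := by
        rw [hS, Finset.sum_congr rfl (fun z _ => hconst z), Finset.sum_const, nsmul_eq_mul,
          Finset.card_univ]
      have e := hx x0
      rw [hSn] at e
      have : μ * v x0 = 0 := by linarith
      exact ⟨0, by simpa using (mul_eq_zero.mp this).resolve_right hx0'⟩

set_option maxHeartbeats 1000000 in
/-- The non-commuting graph of a finite `5`-centralizer group is
L-integral. -/
theorem nc_graph_LIntegral_of_five_centralizer
    (G : Type*) [Group G] [Fintype G]
    (h : Set.ncard {H : Subgroup G | ∃ x : G, H = Subgroup.centralizer {x}} = 5) :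
    ncLIntegral G := by
  rw [ncLIntegral]
  letI := Classical.decEq G
  letI : DecidablePred (fun x : G => x ∉ Subgroup.center G) := fun _ => Classical.dec _
  letI : DecidableRel (nonCommGraph G).Adj := fun _ _ => Classical.dec _
  intro μ hμ
  have htrans : ∀ x y z : {x : G // x ∉ Subgroup.center G},
      ¬(nonCommGraph G).Adj x y → ¬(nonCommGraph G).Adj y z → ¬(nonCommGraph G).Adj x z := by
    intro x y z hxy hyz
    have hxy' : Commute (x : G) (y : G) := not_not.mp hxy
    have hyz' : Commute (y : G) (z : G) := not_not.mp hyz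
    exact not_not.mpr (five_centralizer_CA G h x.2 y.2 z.2 hxy' hyz')
  have hμ' : μ ∈ spectrum ℝ ((nonCommGraph G).lapMatrix ℝ) := hμ
  exact lap_eigen_int (nonCommGraph G) htrans μ hμ'
end

section
/- Let G be a finite non-abelian group and let {x₁, x₂, …, x_r} be a set of pairwise non-commuting elements of G of maximal size (i.e. x_i x_j ≠ x_j x_i for all i ≠ j, and no set of pairwise non-commuting elements of G has more than r elements). If r = 3 or r = 4, then the non-commuting graph 𝒜_G is L-integral. -/
open Polynomial

section GroupPart

variable {G : Type*} [Group G]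

private lemma stripR1 {a b c : G} (h : Commute a (b * c)) (hc : Commute a c) : Commute a b := by
  have := h.mul_right hc.inv_right
  rwa [mul_inv_cancel_right] at this

private lemma stripR2 {a b c : G} (h : Commute a (b * c)) (hb : Commute a b) : Commute a c := by
  have := hb.inv_right.mul_right h
  rwa [inv_mul_cancel_left] at this

private lemma stripL1 {a b c : G} (h : Commute (a * b) c) (ha : Commute a c) : Commute b c :=
  (stripR2 h.symm ha.symm).symm

private lemma stripL2 {a b c : G} (h : Commute (a * b) c) (hb : Commute b c) : Commute a c :=
  (stripR1 h.symm hb.symm).symm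

private lemma neq_of_nc {a b : G} (h : ¬ Commute a b) : a ≠ b := fun e => h (e ▸ Commute.refl a)

private lemma no5 (hmax4 : ∀ t : Finset G, (∀ x ∈ t, ∀ y ∈ t, x ≠ y → x * y ≠ y * x) → t.card ≤ 4)
    (e₁ e₂ e₃ e₄ e₅ : G)
    (h12 : ¬ Commute e₁ e₂) (h13 : ¬ Commute e₁ e₃) (h14 : ¬ Commute e₁ e₄)
    (h15 : ¬ Commute e₁ e₅) (h23 : ¬ Commute e₂ e₃) (h24 : ¬ Commute e₂ e₄)
    (h25 : ¬ Commute e₂ e₅) (h34 : ¬ Commute e₃ e₄) (h35 : ¬ Commute e₃ e₅)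
    (h45 : ¬ Commute e₄ e₅) : False := by
  classical
  set t : Finset G := insert e₁ (insert e₂ (insert e₃ (insert e₄ {e₅}))) with ht
  have hP : ∀ x ∈ t, ∀ y ∈ t, x ≠ y → x * y ≠ y * x := by
    intro x hx y hy hxy
    simp only [ht, Finset.mem_insert, Finset.mem_singleton] at hx hy
    rcases hx with rfl | rfl | rfl | rfl | rfl <;> rcases hy with rfl | rfl | rfl | rfl | rfl <;>
      first
        | exact absurd rfl hxy
        | assumption
        | exact fun h => h12 h.symm | exact fun h => h13 h.symm | exact fun h => h14 h.symm
        | exact fun h => h15 h.symm | exact fun h => h23 h.symm | exact fun h => h24 h.symm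
        | exact fun h => h25 h.symm | exact fun h => h34 h.symm | exact fun h => h35 h.symm
        | exact fun h => h45 h.symm
  have hcard : t.card = 5 := by
    have d12 := neq_of_nc h12; have d13 := neq_of_nc h13; have d14 := neq_of_nc h14
    have d15 := neq_of_nc h15; have d23 := neq_of_nc h23; have d24 := neq_of_nc h24
    have d25 := neq_of_nc h25; have d34 := neq_of_nc h34; have d35 := neq_of_nc h35
    have d45 := neq_of_nc h45
    rw [ht, Finset.card_insert_of_notMem (by simp [d12, d13, d14, d15]),
      Finset.card_insert_of_notMem (by simp [d23, d24, d25]),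
      Finset.card_insert_of_notMem (by simp [d34, d35]),
      Finset.card_insert_of_notMem (by simp [d45]), Finset.card_singleton]
  have := hmax4 t hP
  omega

private lemma cliqueA
    (hmax4 : ∀ t : Finset G, (∀ x ∈ t, ∀ y ∈ t, x ≠ y → x * y ≠ y * x) → t.card ≤ 4)
    {u v b y : G} (huv : ¬ Commute u v) (hbu : Commute b u) (hbv : Commute b v)
    (hyu : Commute y u) (hyv : Commute y v) (hby : ¬ Commute b y) : False := by
  have k34 : ¬ Commute (b * v) (y * v) := fun h =>
    hby (stripR1 (stripR1 h (hbv.mul_left (Commute.refl v))).symm hyv).symm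
  refine no5 hmax4 u (u * v) (b * v) (y * v) (b * (y * v))
    (fun h => huv (stripR2 h (Commute.refl u)))
    (fun h => huv (stripR2 h hbu.symm))
    (fun h => huv (stripR2 h hyu.symm))
    (fun h => huv (stripR2 (stripR2 h hbu.symm) hyu.symm))
    (fun h => huv (stripR1 (stripL1 h.symm (hbu.mul_right hbv)) (Commute.refl v)).symm)
    (fun h => huv (stripR1 (stripL1 h.symm (hyu.mul_right hyv)) (Commute.refl v)).symm)
    (fun h => huv (stripR1 (stripL1 (stripL1 h.symm (hbu.mul_right hbv)) (hyu.mul_right hyv)) (Commute.refl v)).symm)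
    k34
    (fun h => k34 (stripR2 h ((Commute.refl b).mul_left hbv.symm)))
    (fun h => hby (stripL2 (stripR1 h (Commute.refl (y * v))) hbv.symm).symm)

private lemma cliqueB
    (hmax4 : ∀ t : Finset G, (∀ x ∈ t, ∀ y ∈ t, x ≠ y → x * y ≠ y * x) → t.card ≤ 4)
    {p q b y : G} (hpq : ¬ Commute p q) (hbp : Commute b p) (hbq : Commute b q)
    (hyp : ¬ Commute y p) (hyq : ¬ Commute y q) (hby : ¬ Commute b y)
    (hypq : ¬ Commute y (p * q)) : False :=
  no5 hmax4 p q (p * q) y (y * b)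
    hpq
    (fun h => hpq (stripR2 h (Commute.refl p)))
    (fun h => hyp h.symm)
    (fun h => hyp (stripR1 h hbp.symm).symm)
    (fun h => hpq (stripR1 h (Commute.refl q)).symm)
    (fun h => hyq h.symm)
    (fun h => hyq (stripR1 h hbq.symm).symm)
    (fun h => hypq h.symm)
    (fun h => hypq (stripR1 h (hbp.mul_right hbq).symm).symm)
    (fun h => hby (stripR2 h (Commute.refl y)).symm)

private lemma cliqueC
    (hmax4 : ∀ t : Finset G, (∀ x ∈ t, ∀ y ∈ t, x ≠ y → x * y ≠ y * x) → t.card ≤ 4)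
    {p q b y : G} (hpq : ¬ Commute p q) (hbp : Commute b p) (hbq : Commute b q)
    (hyp : ¬ Commute y p) (hyq : ¬ Commute y q) (hby : ¬ Commute b y)
    (hypq : Commute y (p * q)) : False :=
  no5 hmax4 p q y (y * b) (p * q * b)
    hpq
    (fun h => hyp h.symm)
    (fun h => hyp (stripR1 h hbp.symm).symm)
    (fun h => hpq (stripR2 (stripR1 h hbp.symm) (Commute.refl p)))
    (fun h => hyq h.symm)
    (fun h => hyq (stripR1 h hbq.symm).symm)
    (fun h => hpq (stripR1 (stripR1 h hbq.symm) (Commute.refl q)).symm)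
    (fun h => hby (stripR2 h (Commute.refl y)).symm)
    (fun h => hby (stripR2 h hypq).symm)
    (fun h => hby (stripR1 (stripL1 h.symm (hypq.symm.mul_right (hbp.mul_right hbq).symm)) (Commute.refl b)))

/-- Transitivity of commuting through a non-central element, given no 5 pairwise
non-commuting elements. -/
private lemma comm_trans
    (hmax4 : ∀ t : Finset G, (∀ x ∈ t, ∀ y ∈ t, x ≠ y → x * y ≠ y * x) → t.card ≤ 4)
    {b a c : G} (hb : b ∉ Subgroup.center G) (hba : Commute b a) (hbc : Commute b c) :
    Commute a c := by
  by_contra hac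
  obtain ⟨y, hy⟩ : ∃ y, ¬ Commute b y := by
    rw [Subgroup.mem_center_iff] at hb
    push_neg at hb
    obtain ⟨g, hg⟩ := hb
    exact ⟨g, fun h => hg h.symm⟩
  have hbac : Commute b (a * c) := hba.mul_right hbc
  have hac' : ¬ Commute a (a * c) := fun h => hac (stripR2 h (Commute.refl a))
  have hcac : ¬ Commute c (a * c) := fun h => hac (stripR1 h (Commute.refl c)).symm
  by_cases hya : Commute y a
  · by_cases hyc : Commute y c
    · exact cliqueA hmax4 hac hba hbc hya hyc hy
    · by_cases hyac : Commute y (a * c)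
      · exact cliqueA hmax4 hac' hba hbac hya hyac hy
      · by_cases h2 : Commute y (c * (a * c))
        · exact cliqueC hmax4 hcac hbc hbac hyc hyac hy h2
        · exact cliqueB hmax4 hcac hbc hbac hyc hyac hy h2
  · by_cases hyc : Commute y c
    · by_cases hyac : Commute y (a * c)
      · exact cliqueA hmax4 hcac hbc hbac hyc hyac hy
      · by_cases h2 : Commute y (a * (a * c))
        · exact cliqueC hmax4 hac' hba hbac hya hyac hy h2
        · exact cliqueB hmax4 hac' hba hbac hya hyac hy h2
    · by_cases h2 : Commute y (a * c)
      · exact cliqueC hmax4 hac hba hbc hya hyc hy h2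
      · exact cliqueB hmax4 hac hba hbc hya hyc hy h2

end GroupPart

set_option maxRecDepth 10000 in
/-- If a maximal-size set of pairwise non-commuting elements of a
finite non-abelian group `G` has size `3` or `4`, then the non-commuting graph of `G`
is L-integral. -/
theorem nc_graph_LIntegral_of_max_noncommuting_three_or_four
    (G : Type*) [Group G] [Fintype G]
    (hna : ¬ ∀ a b : G, a * b = b * a)
    (s : Finset G)
    (hs : ∀ x ∈ s, ∀ y ∈ s, x ≠ y → x * y ≠ y * x)
    (hmax : ∀ t : Finset G, (∀ x ∈ t, ∀ y ∈ t, x ≠ y → x * y ≠ y * x) → t.card ≤ s.card)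
    (hr : s.card = 3 ∨ s.card = 4) :
    ncLIntegral G := by
  have hmax4 : ∀ t : Finset G, (∀ x ∈ t, ∀ y ∈ t, x ≠ y → x * y ≠ y * x) → t.card ≤ 4 := by
    intro t ht
    have := hmax t ht
    rcases hr with h | h <;> omega
  have htrans : ∀ {b a c : G}, b ∉ Subgroup.center G → Commute b a → Commute b c →
      Commute a c := fun hb hba hbc => comm_trans hmax4 hb hba hbc
  letI := Classical.decEq G
  letI : DecidablePred (fun x : G => x ∉ Subgroup.center G) := fun _ => Classical.dec _
  letI : DecidableRel (nonCommGraph G).Adj := fun _ _ => Classical.dec _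
  letI : ∀ a b : G, Decidable (Commute a b) := fun _ _ => Classical.dec _
  show ∀ μ ∈ spectrum ℝ (ncLap G), ∃ k : ℤ, μ = (k : ℝ)
  intro μ hμ
  set V := {x : G // x ∉ Subgroup.center G} with hV
  have hMdef : ncLap G = (nonCommGraph G).lapMatrix ℝ := rfl
  set L : Matrix V V ℝ := (nonCommGraph G).lapMatrix ℝ with hL
  rw [spectrum.mem_iff, hMdef] at hμ
  have hdet : (algebraMap ℝ (Matrix V V ℝ) μ - L).det = 0 := by
    by_contra hne
    exact hμ ((Matrix.isUnit_iff_isUnit_det _).mpr (isUnit_iff_ne_zero.mpr hne))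
  obtain ⟨v, hv0, hveq⟩ := (Matrix.exists_mulVec_eq_zero_iff).mpr hdet
  have hA : ∀ x : V, ((algebraMap ℝ (Matrix V V ℝ) μ).mulVec v) x = μ * v x := by
    intro x
    simp [Matrix.mulVec, dotProduct, Matrix.algebraMap_matrix_apply, ite_mul]
  have heq : ∀ x : V, ((nonCommGraph G).degree x : ℝ) * v x
      - ∑ u ∈ (nonCommGraph G).neighborFinset x, v u = μ * v x := by
    intro x
    have h1 := congrFun hveq x
    rw [Matrix.sub_mulVec] at h1
    have h2 : (L.mulVec v) x = μ * v x := by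
      have := h1
      simp only [Pi.sub_apply, Pi.zero_apply, hA, sub_eq_zero] at this
      exact this.symm
    rw [SimpleGraph.lapMatrix_mulVec_apply] at h2
    exact h2
  -- classes
  set cls : V → Finset V := fun x => Finset.univ.filter (fun y => Commute (x : G) (y : G))
    with hcls
  have hmem_cls : ∀ x y : V, y ∈ cls x ↔ Commute (x : G) (y : G) := by
    intro x y; simp only [hcls, Finset.mem_filter, Finset.mem_univ, true_and]
  have hclseq : ∀ x y : V, y ∈ cls x → cls y = cls x := by
    intro x y hxy
    rw [hmem_cls] at hxy
    ext z
    rw [hmem_cls, hmem_cls]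
    exact ⟨fun hyz => htrans y.2 hxy.symm hyz, fun hxz => htrans x.2 hxy hxz⟩
  have hnb : ∀ x : V, (nonCommGraph G).neighborFinset x = Finset.univ \ cls x := by
    intro x
    ext z
    rw [SimpleGraph.mem_neighborFinset, Finset.mem_sdiff, hmem_cls]
    simp only [Finset.mem_univ, true_and]
    exact Iff.rfl
  set n := Fintype.card V with hn
  have hdegn : ∀ x : V, ((nonCommGraph G).degree x : ℝ) = (n : ℝ) - ((cls x).card : ℝ) := by
    intro x
    have h1 : (nonCommGraph G).degree x = n - (cls x).card := by
      rw [← SimpleGraph.card_neighborFinset_eq_degree, hnb,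
        Finset.card_sdiff_of_subset (Finset.subset_univ _), Finset.card_univ]
    rw [h1, Nat.cast_sub (by rw [hn]; exact (Finset.card_le_univ _).trans_eq Finset.card_univ)]
  set S : ℝ := ∑ y : V, v y with hS
  set Tf : V → ℝ := fun x => ∑ y ∈ cls x, v y with hTf
  have heq2 : ∀ x : V, ((n : ℝ) - ((cls x).card : ℝ)) * v x - (S - Tf x) = μ * v x := by
    intro x
    have h1 := heq x
    rw [hdegn, hnb, Finset.sum_sdiff_eq_sub (Finset.subset_univ _)] at h1
    exact h1
  by_cases hex : ∃ x : V, μ = (n : ℝ) - ((cls x).card : ℝ)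
  · obtain ⟨x, hx⟩ := hex
    exact ⟨(n : ℤ) - ((cls x).card : ℤ), by push_cast; exact hx⟩
  by_cases h0 : μ = 0
  · exact ⟨0, by simp [h0]⟩
  by_cases hN : μ = (n : ℝ)
  · exact ⟨(n : ℤ), by exact_mod_cast hN⟩
  exfalso
  push_neg at hex
  have hsame : ∀ x y : V, y ∈ cls x → v y = v x := by
    intro x y hyx
    have e1 := heq2 x
    have e2 := heq2 y
    have hmc : ((cls y).card : ℝ) = ((cls x).card : ℝ) := by rw [hclseq x y hyx]
    have hTc : Tf y = Tf x := by simp only [hTf]; rw [hclseq x y hyx]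
    have c : ((n : ℝ) - ((cls x).card : ℝ)) - μ ≠ 0 := sub_ne_zero.mpr (Ne.symm (hex x))
    refine mul_left_cancel₀ c ?_
    have f1 : (((n : ℝ) - ((cls x).card : ℝ)) - μ) * v x = S - Tf x := by linear_combination e1
    have f2 : (((n : ℝ) - ((cls x).card : ℝ)) - μ) * v y = S - Tf x := by
      rw [← hmc, ← hTc]
      linear_combination e2
    rw [f1, f2]
  have hT2 : ∀ x : V, Tf x = ((cls x).card : ℝ) * v x := by
    intro x
    calc Tf x = ∑ _y ∈ cls x, v x := Finset.sum_congr rfl fun y hy => hsame x y hy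
    _ = ((cls x).card : ℝ) * v x := by rw [Finset.sum_const, nsmul_eq_mul]
  have hkey : ∀ x : V, ((n : ℝ) - μ) * v x = S := by
    intro x
    have h1 := heq2 x
    rw [hT2 x] at h1
    linear_combination h1
  have hallv : ∀ x y : V, v x = v y := fun x y =>
    mul_left_cancel₀ (sub_ne_zero.mpr (Ne.symm hN)) ((hkey x).trans (hkey y).symm)
  have hzero : ∀ x : V, v x = 0 := by
    intro x
    have hSx : S = (n : ℝ) * v x := by
      rw [hS]
      calc ∑ y : V, v y = ∑ _y : V, v x := Finset.sum_congr rfl fun y _ => hallv y x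
      _ = (n : ℝ) * v x := by rw [Finset.sum_const, Finset.card_univ, nsmul_eq_mul]
    have h1 := hkey x
    rw [hSx] at h1
    have h2 : μ * v x = 0 := by linear_combination -h1
    rcases mul_eq_zero.mp h2 with h | h
    · exact absurd h h0
    · exact h
  exact hv0 (funext hzero)
end

section
/- Let G be a finite group and let p be the smallest prime divisor of |G|. If the commuting probability of G satisfies Pr(G) = (p² + p − 1)/p³, then the non-commuting graph 𝒜_G is L-integral. -/
open Polynomial Subgroup Finset

section helpers

lemma sumCent {G : Type*} [Group G] [Fintype G] :
    Nat.card {q : G × G // Commute q.1 q.2} =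
      ∑ x : G, Nat.card (Subgroup.centralizer ({x} : Set G)) := by
  classical
  rw [Nat.card_congr (Equiv.subtypeProdEquivSigmaSubtype fun a b : G => Commute a b),
    Nat.card_eq_fintype_card, Fintype.card_sigma]
  refine Finset.sum_congr rfl fun x _ => ?_
  rw [← Nat.card_eq_fintype_card]
  exact Nat.card_congr (Equiv.subtypeEquivRight fun y => by
    simp [Subgroup.mem_centralizer_singleton_iff, Commute, SemiconjBy, eq_comm])

lemma card_commute_filter {G : Type*} [Group G] [Fintype G] [DecidableEq G]
    [DecidableRel (fun a b : G => Commute a b)] (x : G) :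
    (Finset.univ.filter fun y : G => Commute x y).card
      = Nat.card (Subgroup.centralizer ({x} : Set G)) := by
  classical
  rw [← Fintype.card_subtype]
  rw [← Nat.card_eq_fintype_card]
  exact Nat.card_congr (Equiv.subtypeEquivRight fun y => by
    simp [Subgroup.mem_centralizer_singleton_iff, Commute, SemiconjBy, eq_comm])

end helpers
set_option maxHeartbeats 1000000 in
lemma key_counts {G : Type*} [Group G] [Fintype G]
    (p : ℕ) (hp : p.Prime) (hdvd : p ∣ Nat.card G)
    (hmin : ∀ q : ℕ, q.Prime → q ∣ Nat.card G → p ≤ q)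
    (h : commProb G = ((p : ℚ) ^ 2 + p - 1) / p ^ 3) :
    Nat.card G = p ^ 2 * Nat.card (Subgroup.center G) ∧
    ∀ x : G, x ∉ Subgroup.center G →
      p * Nat.card (Subgroup.centralizer ({x} : Set G)) = Nat.card G := by
  classical
  set g := Nat.card G with hg
  set z := Nat.card (Subgroup.center G) with hz
  have hg0 : 0 < g := Nat.card_pos
  have hp2 : 2 ≤ p := hp.two_le
  -- any divisor of g other than 1 is ≥ p
  have hdiv : ∀ d : ℕ, d ∣ g → d ≠ 1 → p ≤ d := by
    intro d hd hd1
    have hd0 : d ≠ 0 := by rintro rfl; exact absurd (Nat.eq_zero_of_zero_dvd hd) (by omega)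
    calc p ≤ d.minFac := hmin _ (Nat.minFac_prime hd1) ((Nat.minFac_dvd d).trans hd)
      _ ≤ d := Nat.minFac_le (Nat.pos_of_ne_zero hd0)
  -- the master equation in ℕ
  have hmaster : p ^ 3 * ∑ x : G, Nat.card (Subgroup.centralizer ({x} : Set G))
      = (p ^ 2 + p - 1) * g ^ 2 := by
    have hq : ((Nat.card {q : G × G // Commute q.1 q.2} : ℚ)) / (g : ℚ) ^ 2
        = ((p : ℚ) ^ 2 + p - 1) / p ^ 3 := by
      rw [← h, commProb_def]
    have hps : ((p : ℚ) ^ 2 + p - 1) = ((p ^ 2 + p - 1 : ℕ) : ℚ) := by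
      have : 1 ≤ p ^ 2 + p := by nlinarith
      push_cast [this]; ring
    rw [div_eq_div_iff (by positivity) (by positivity), hps] at hq
    have := hq
    rw [← sumCent]
    have hcast : ((p ^ 3 * Nat.card {q : G × G // Commute q.1 q.2} : ℕ) : ℚ)
        = (((p ^ 2 + p - 1) * g ^ 2 : ℕ) : ℚ) := by push_cast; push_cast at this; linarith
    exact_mod_cast hcast
  -- center is not the whole group, and its index is at least p^2
  set i := (Subgroup.center G).index with hi
  have hzi : z * i = g := Subgroup.card_mul_index _
  have hztop : Subgroup.center G ≠ ⊤ := by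
    intro htop
    have hcent : ∀ x : G, Subgroup.centralizer ({x} : Set G) = ⊤ := by
      intro x
      rw [eq_top_iff]
      intro y _
      rw [Subgroup.mem_centralizer_singleton_iff]
      have : x ∈ Subgroup.center G := htop ▸ Subgroup.mem_top x
      exact Subgroup.mem_center_iff.mp this y
    have hsum : ∑ x : G, Nat.card (Subgroup.centralizer ({x} : Set G)) = g * g := by
      rw [Finset.sum_congr rfl fun x _ => by rw [hcent x, Subgroup.card_top]]
      simp [Finset.sum_const, mul_comm, hg, Nat.card_eq_fintype_card]
    rw [hsum] at hmaster
    have hpp : p ^ 3 = p ^ 2 + p - 1 := by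
      have h2 : p ^ 3 * g ^ 2 = (p ^ 2 + p - 1) * g ^ 2 := by rw [← hmaster]; ring
      exact Nat.eq_of_mul_eq_mul_right (by positivity) h2
    have h1 : 2 * p ^ 2 ≤ p ^ 3 := by nlinarith
    have h2 : 2 * p ≤ p ^ 2 := by nlinarith
    omega
  have hi1 : i ≠ 1 := fun h1 => hztop (Subgroup.index_eq_one.mp h1)
  have hig : i ∣ g := Subgroup.index_dvd_card _
  have hinp : ¬ i.Prime := by
    intro hip
    have : Nat.card (G ⧸ Subgroup.center G) = i := (Subgroup.index_eq_card _).symm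
    have : Fact i.Prime := ⟨hip⟩
    have hcyc : IsCyclic (G ⧸ Subgroup.center G) := isCyclic_of_prime_card ‹Nat.card (G ⧸ Subgroup.center G) = i›
    have hcomm := commutative_of_cyclic_center_quotient (QuotientGroup.mk' (Subgroup.center G))
      (by rw [QuotientGroup.ker_mk'])
    exact hztop (by
      rw [eq_top_iff]; intro x _
      exact Subgroup.mem_center_iff.mpr fun y => hcomm y x)
  have hip2 : p ^ 2 ≤ i := by
    have hq := Nat.minFac_prime hi1
    set q := i.minFac with hqd
    have hqi : q ∣ i := Nat.minFac_dvd i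
    obtain ⟨r, hr⟩ := hqi
    have hi0 : i ≠ 0 := fun h0 => by rw [h0, mul_zero] at hzi; omega
    have hr1 : r ≠ 1 := by rintro rfl; rw [mul_one] at hr; exact hinp (hr ▸ hq)
    have hpq : p ≤ q := hmin q hq (Nat.dvd_trans (hr ▸ Dvd.intro r rfl) hig)
    have hpr : p ≤ r := hdiv r (dvd_trans ⟨q, by rw [hr]; ring⟩ hig) hr1
    calc p ^ 2 = p * p := sq p
      _ ≤ q * r := Nat.mul_le_mul hpq hpr
      _ = i := hr.symm
  -- per-element bounds
  have hcle : ∀ x : G, x ∉ Subgroup.center G →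
      p * Nat.card (Subgroup.centralizer ({x} : Set G)) ≤ g := by
    intro x hx
    set H := Subgroup.centralizer ({x} : Set G) with hH
    have hHmul : Nat.card H * H.index = g := Subgroup.card_mul_index _
    have hHne : H.index ≠ 1 := by
      intro h1
      have : H = ⊤ := Subgroup.index_eq_one.mp h1
      exact hx (Subgroup.mem_center_iff.mpr fun y => by
        have : y ∈ H := this ▸ Subgroup.mem_top y
        exact Subgroup.mem_centralizer_singleton_iff.mp this)
    have hpH : p ≤ H.index := hdiv _ (Subgroup.index_dvd_card _) hHne
    calc p * Nat.card H ≤ H.index * Nat.card H := Nat.mul_le_mul_right _ hpH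
      _ = g := by rw [mul_comm]; exact hHmul
  have hcent_card : ∀ x : G, x ∈ Subgroup.center G →
      Nat.card (Subgroup.centralizer ({x} : Set G)) = g := by
    intro x hx
    have : Subgroup.centralizer ({x} : Set G) = ⊤ := by
      rw [eq_top_iff]
      intro y _
      exact Subgroup.mem_centralizer_singleton_iff.mpr (Subgroup.mem_center_iff.mp hx y)
    rw [this, Subgroup.card_top]
  -- split the sum
  set C : Finset G := Finset.univ.filter (fun x => x ∈ Subgroup.center G) with hC
  set D : Finset G := Finset.univ.filter (fun x => ¬ x ∈ Subgroup.center G) with hD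
  have hCcard : C.card = z := by
    rw [hz, Nat.card_eq_fintype_card, Fintype.card_subtype]
  have hDcard : D.card = g - z := by
    have : C.card + D.card = g := by
      rw [hC, hD, Finset.card_filter_add_card_filter_not, hg, Nat.card_eq_fintype_card,
        Finset.card_univ]
    omega
  set S : ℕ := ∑ x ∈ D, Nat.card (Subgroup.centralizer ({x} : Set G)) with hS
  have hsplit : ∑ x : G, Nat.card (Subgroup.centralizer ({x} : Set G)) = z * g + S := by
    rw [← Finset.sum_filter_add_sum_filter_not Finset.univ (fun x => x ∈ Subgroup.center G)]
    congr 1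
    rw [Finset.sum_congr rfl (fun x hx => hcent_card x (Finset.mem_filter.mp hx).2),
      Finset.sum_const, smul_eq_mul, hCcard]
  rw [hsplit] at hmaster
  have hSle : p * S ≤ (g - z) * g := by
    rw [hS, Finset.mul_sum]
    calc ∑ x ∈ D, p * Nat.card (Subgroup.centralizer ({x} : Set G))
        ≤ ∑ x ∈ D, g := Finset.sum_le_sum fun x hx => hcle x (Finset.mem_filter.mp hx).2
      _ = (g - z) * g := by rw [Finset.sum_const, smul_eq_mul, hDcard]
  have hzleg : z ≤ g := by
    have : 1 ≤ i := Nat.one_le_iff_ne_zero.mpr (fun h0 => by rw [h0, mul_zero] at hzi; omega)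
    calc z = z * 1 := (mul_one z).symm
      _ ≤ z * i := Nat.mul_le_mul_left z this
      _ = g := hzi
  -- go to ℤ
  have hgz : g = p ^ 2 * z := by
    have e1 : (p : ℤ) ^ 3 * z * g + (p:ℤ)^3 * S = ((p:ℤ)^2 + p - 1) * g ^ 2 := by
      have h1 : 1 ≤ p ^ 2 + p := by nlinarith
      have := hmaster
      zify [h1] at this
      linarith [this]
    have e2 : (p:ℤ) * S ≤ ((g:ℤ) - z) * g := by
      have := hSle
      zify [hzleg] at this
      linarith
    have e3 : (p:ℤ)^2 * z ≤ g := by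
      have : p ^ 2 * z ≤ i * z := Nat.mul_le_mul_right z hip2
      have h4 : p ^ 2 * z ≤ g := by rw [← hzi, mul_comm z i]; exact this
      exact_mod_cast h4
    have e2' : (p:ℤ)^2 * ((p:ℤ) * S) ≤ (p:ℤ)^2 * (((g:ℤ) - z) * g) :=
      mul_le_mul_of_nonneg_left e2 (by positivity)
    have k1 : ((p:ℤ) - 1) * g * g ≤ ((p:ℤ) - 1) * ((p:ℤ)^2 * z) * g := by nlinarith [e1, e2']
    have hP1 : (0:ℤ) < (p:ℤ) - 1 := by
      have : (2:ℤ) ≤ p := by exact_mod_cast hp2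
      linarith
    have hG0 : (0:ℤ) < g := by exact_mod_cast hg0
    have k2 : ((p:ℤ) - 1) * g ≤ ((p:ℤ) - 1) * ((p:ℤ)^2 * z) :=
      le_of_mul_le_mul_right k1 hG0
    have k3 : (g:ℤ) ≤ (p:ℤ)^2 * z := le_of_mul_le_mul_left k2 hP1
    have : (g:ℤ) = (p:ℤ)^2 * z := le_antisymm k3 e3
    exact_mod_cast this
  refine ⟨hgz, ?_⟩
  -- exact value of the noncentral sum
  have hSeq : p * S = (g - z) * g := by
    have h1 : 1 ≤ p ^ 2 + p := by nlinarith
    have e1 : (p : ℤ) ^ 3 * z * g + (p:ℤ)^3 * S = ((p:ℤ)^2 + p - 1) * g ^ 2 := by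
      have := hmaster
      zify [h1] at this
      linarith
    have hgzZ : (g:ℤ) = (p:ℤ)^2 * z := by exact_mod_cast hgz
    have k1 : (p:ℤ)^2 * ((p:ℤ) * S) = (p:ℤ)^2 * (((g:ℤ) - z) * g) := by
      linear_combination e1 + (((p:ℤ) - 1) * (g:ℤ)) * hgzZ
    have k2 : (p:ℤ) * S = ((g:ℤ) - z) * g := by
      have hp0 : ((p:ℤ)^2 : ℤ) ≠ 0 := by positivity
      exact mul_left_cancel₀ hp0 k1
    zify [hzleg]
    linarith [k2]
  -- equality for each noncentral element
  intro x hx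
  by_contra hne
  have hxD : x ∈ D := Finset.mem_filter.mpr ⟨Finset.mem_univ x, hx⟩
  have hlt : ∑ y ∈ D, p * Nat.card (Subgroup.centralizer ({y} : Set G)) < ∑ y ∈ D, g :=
    Finset.sum_lt_sum (fun y hy => hcle y (Finset.mem_filter.mp hy).2)
      ⟨x, hxD, lt_of_le_of_ne (hcle x hx) hne⟩
  rw [← Finset.mul_sum, ← hS, hSeq, Finset.sum_const, smul_eq_mul, hDcard] at hlt
  exact lt_irrefl _ hlt

lemma cent_trans {G : Type*} [Group G] [Fintype G]
    (p : ℕ) (hp : p.Prime)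
    (hgz : Nat.card G = p ^ 2 * Nat.card (Subgroup.center G))
    (hc : ∀ x : G, x ∉ Subgroup.center G →
      p * Nat.card (Subgroup.centralizer ({x} : Set G)) = Nat.card G)
    (x : G) (hx : x ∉ Subgroup.center G) {a b : G}
    (ha : Commute x a) (hb : Commute x b) : Commute a b := by
  classical
  set z := Nat.card (Subgroup.center G) with hzd
  have hz0 : z ≠ 0 := Nat.card_pos.ne'
  set H := Subgroup.centralizer ({x} : Set G) with hH
  have haH : a ∈ H := Subgroup.mem_centralizer_singleton_iff.mpr ha.symm.eq
  have hbH : b ∈ H := Subgroup.mem_centralizer_singleton_iff.mpr hb.symm.eq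
  have hcardH : Nat.card H = p * z := by
    have h1 : p * Nat.card H = p * (p * z) := by
      rw [hc x hx, hgz]; ring
    exact Nat.eq_of_mul_eq_mul_left hp.pos h1
  set A : Subgroup G := Subgroup.center G ⊔ Subgroup.zpowers x with hA
  have hAH : A ≤ H := by
    rw [hA, sup_le_iff]
    exact ⟨Subgroup.center_le_centralizer _,
      (Subgroup.zpowers_le).mpr (Subgroup.mem_centralizer_singleton_iff.mpr rfl)⟩
  obtain ⟨k, hk⟩ := Subgroup.card_dvd_of_le (le_sup_left : Subgroup.center G ≤ A)
  have hkp : k ∣ p := by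
    have h1 : Nat.card A ∣ Nat.card H := Subgroup.card_dvd_of_le hAH
    rw [hk, hcardH, mul_comm p z] at h1
    exact (mul_dvd_mul_iff_left hz0).mp h1
  have hk1 : k ≠ 1 := by
    rintro rfl
    rw [mul_one] at hk
    have : A = Subgroup.center G :=
      (Subgroup.eq_of_le_of_card_ge (le_sup_left : Subgroup.center G ≤ A) (le_of_eq hk)).symm
    exact hx (this ▸ Subgroup.mem_sup_right (Subgroup.mem_zpowers x))
  have hkP : k = p := ((Nat.dvd_prime hp).mp hkp).resolve_left hk1
  have hAeqH : A = H := by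
    refine Subgroup.eq_of_le_of_card_ge hAH ?_
    rw [hcardH, hk, hkP, mul_comm]
  -- decompose
  have hdec : ∀ c ∈ H, ∃ u ∈ Subgroup.center G, ∃ v ∈ Subgroup.zpowers x, u * v = c := by
    intro c hcH
    have : c ∈ (↑(Subgroup.center G ⊔ Subgroup.zpowers x) : Set G) := by
      rw [← hA, hAeqH]; exact hcH
    rw [Subgroup.normal_mul] at this
    exact Set.mem_mul.mp this
  obtain ⟨u1, hu1, v1, hv1, hav⟩ := hdec a haH
  obtain ⟨u2, hu2, v2, hv2, hbv⟩ := hdec b hbH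
  obtain ⟨m1, rfl⟩ := Subgroup.mem_zpowers_iff.mp hv1
  obtain ⟨m2, rfl⟩ := Subgroup.mem_zpowers_iff.mp hv2
  have hcu : ∀ u ∈ Subgroup.center G, ∀ w : G, Commute u w := fun u hu w =>
    (Subgroup.mem_center_iff.mp hu w).symm
  rw [← hav, ← hbv]
  exact Commute.mul_left
    (hcu u1 hu1 _)
    (Commute.mul_right ((hcu u2 hu2 _).symm) (zpow_mul_comm x m1 m2))

set_option maxHeartbeats 1600000 in
/-- If `p` is the smallest prime divisor of `|G|` and
`Pr(G) = (p² + p − 1)/p³`, then the non-commuting graph of `G` is L-integral. -/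
theorem nc_graph_LIntegral_of_commProb_eq
    (G : Type*) [Group G] [Fintype G]
    (p : ℕ) (hp : p.Prime) (hdvd : p ∣ Nat.card G)
    (hmin : ∀ q : ℕ, q.Prime → q ∣ Nat.card G → p ≤ q)
    (h : commProb G = ((p : ℚ) ^ 2 + p - 1) / p ^ 3) :
    ncLIntegral G := by
  obtain ⟨hgz, hc⟩ := key_counts p hp hdvd hmin h
  letI := Classical.decEq G
  letI : DecidablePred (fun x : G => x ∉ Subgroup.center G) := fun _ => Classical.dec _
  letI : DecidableRel (nonCommGraph G).Adj := fun _ _ => Classical.dec _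
  letI : DecidableRel (fun a b : G => Commute a b) := fun _ _ => Classical.dec _
  intro μ hμ
  rcases isEmpty_or_nonempty {x : G // x ∉ Subgroup.center G} with hV | hV
  · exact absurd hμ (by simp [spectrum.mem_iff, isUnit_of_subsingleton])
  -- notation
  set z := Nat.card (Subgroup.center G) with hzd
  set n := Fintype.card {x : G // x ∉ Subgroup.center G} with hnd
  set m := (p - 1) * z with hmd
  have hz0 : z ≠ 0 := Nat.card_pos.ne'
  have hcent_card : ∀ x : G, x ∉ Subgroup.center G →
      Nat.card (Subgroup.centralizer ({x} : Set G)) = p * z := by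
    intro x hx
    have h1 : p * Nat.card (Subgroup.centralizer ({x} : Set G)) = p * (p * z) := by
      rw [hc x hx, hgz]; ring
    exact Nat.eq_of_mul_eq_mul_left hp.pos h1
  -- the row count
  have hrow : ∀ v : {x : G // x ∉ Subgroup.center G},
      (Finset.univ.filter fun w : {x : G // x ∉ Subgroup.center G}
        => Commute (v : G) (w : G)).card = m := by
    intro v
    have step1 : (Finset.univ.filter fun w : {x : G // x ∉ Subgroup.center G}
        => Commute (v : G) (w : G)).card
        = Fintype.card {w : {x : G // x ∉ Subgroup.center G} // Commute (v : G) (w : G)} :=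
      (Fintype.card_subtype _).symm
    have step2 : Fintype.card {w : {x : G // x ∉ Subgroup.center G} // Commute (v : G) (w : G)}
        = (Finset.univ.filter fun y : G => y ∉ Subgroup.center G ∧ Commute (v : G) y).card := by
      rw [← Fintype.card_subtype]
      exact Fintype.card_congr (Equiv.subtypeSubtypeEquivSubtypeInter _ _)
    have hA : (Finset.univ.filter fun y : G => Commute (v : G) y).card = p * z := by
      rw [card_commute_filter, hcent_card _ v.2]
    have hB : ((Finset.univ.filter fun y : G => Commute (v : G) y).filter
        fun y => y ∈ Subgroup.center G).card = z := by
      have heq : ((Finset.univ.filter fun y : G => Commute (v : G) y).filter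
          fun y => y ∈ Subgroup.center G)
          = Finset.univ.filter fun y : G => y ∈ Subgroup.center G := by
        ext y
        simp only [Finset.mem_filter, Finset.mem_univ, true_and]
        exact ⟨fun hy => hy.2, fun hy => ⟨Subgroup.mem_center_iff.mp hy (v : G), hy⟩⟩
      rw [heq, ← Fintype.card_subtype, ← Nat.card_eq_fintype_card]
    have hsplit := Finset.card_filter_add_card_filter_not
      (s := Finset.univ.filter fun y : G => Commute (v : G) y)
      (p := fun y => y ∈ Subgroup.center G)
    have hC : ((Finset.univ.filter fun y : G => Commute (v : G) y).filter
        fun y => ¬ y ∈ Subgroup.center G)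
        = Finset.univ.filter fun y : G => y ∉ Subgroup.center G ∧ Commute (v : G) y := by
      ext y
      simp only [Finset.mem_filter, Finset.mem_univ, true_and]
      tauto
    rw [hA, hB, hC] at hsplit
    rw [step1, step2, hmd]
    have hp1 : 1 ≤ p := hp.pos
    -- hsplit : z + card = p * z
    have : p * z = z + (p - 1) * z := by
      cases' Nat.exists_eq_add_of_le hp1 with k hk
      subst hk
      simp [Nat.add_sub_cancel_left, add_mul, one_mul, Nat.add_comm]
    omega
  obtain ⟨v0⟩ := hV
  have hmn : m ≤ n := by
    rw [← hrow v0, hnd]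
    exact (Finset.card_filter_le _ _).trans (by rw [Finset.card_univ])
  -- the matrices J and B
  set J : Matrix {x : G // x ∉ Subgroup.center G} {x : G // x ∉ Subgroup.center G} ℝ :=
    Matrix.of (fun _ _ => (1 : ℝ)) with hJd
  set B : Matrix {x : G // x ∉ Subgroup.center G} {x : G // x ∉ Subgroup.center G} ℝ :=
    Matrix.of (fun v w => if Commute (v : G) (w : G) then (1 : ℝ) else 0) with hBd
  -- degrees
  have hdeg : ∀ v : {x : G // x ∉ Subgroup.center G},
      (nonCommGraph G).degree v = n - m := by
    intro v
    have h1 : (nonCommGraph G).neighborFinset v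
        = (Finset.univ : Finset {x : G // x ∉ Subgroup.center G}).filter
            (fun w : {x : G // x ∉ Subgroup.center G} => ¬ Commute (v : G) (w : G)) := by
      ext w
      simp only [SimpleGraph.mem_neighborFinset, Finset.mem_filter, Finset.mem_univ, true_and]
      rfl
    have h2 := Finset.card_filter_add_card_filter_not
      (s := (Finset.univ : Finset {x : G // x ∉ Subgroup.center G}))
      (p := fun w => Commute (v : G) (w : G))
    rw [hrow v, Finset.card_univ] at h2
    rw [SimpleGraph.degree, h1]
    have h3 : (Finset.univ.filter fun w : {x : G // x ∉ Subgroup.center G}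
        => ¬ Commute (v : G) (w : G)).card = n - m := by omega
    exact h3
  -- the Laplacian in terms of J and B
  have hLeq : ncLap G = ((n : ℝ) - m) • 1 - J + B := by
    show (nonCommGraph G).lapMatrix ℝ = _
    ext i j
    by_cases hij : i = j
    · subst hij
      have hcom : Commute (i : G) (i : G) := Commute.refl _
      simp only [SimpleGraph.lapMatrix, SimpleGraph.degMatrix, SimpleGraph.adjMatrix,
        Matrix.sub_apply, Matrix.diagonal_apply_eq, Matrix.of_apply, Matrix.add_apply,
        Matrix.smul_apply, Matrix.one_apply_eq, smul_eq_mul, mul_one, hJd, hBd,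
        SimpleGraph.irrefl, if_false, if_pos hcom]
      rw [hdeg i]
      push_cast [hmn]
      ring
    · have hadj : (nonCommGraph G).Adj i j ↔ ¬ Commute (i : G) (j : G) := Iff.rfl
      simp only [SimpleGraph.lapMatrix, SimpleGraph.degMatrix, SimpleGraph.adjMatrix,
        Matrix.sub_apply, Matrix.diagonal_apply_ne _ hij, Matrix.of_apply, Matrix.add_apply,
        Matrix.smul_apply, Matrix.one_apply_ne hij, smul_eq_mul, mul_zero, hJd, hBd]
      by_cases hcom : Commute (i : G) (j : G)
      · rw [if_neg (by rw [hadj]; exact not_not_intro hcom), if_pos hcom]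
        ring
      · rw [if_pos (hadj.mpr hcom), if_neg hcom]
        ring
  -- product identities
  have hJJ : J * J = (n : ℝ) • J := by
    ext i j
    simp [hJd, Matrix.mul_apply, Finset.sum_const, Finset.card_univ, hnd]
  have hBJ : B * J = (m : ℝ) • J := by
    ext i j
    simp only [hBd, hJd, Matrix.mul_apply, Matrix.of_apply, Matrix.smul_apply, smul_eq_mul,
      mul_one, Finset.sum_boole]
    rw [hrow i]
  have hJB : J * B = (m : ℝ) • J := by
    ext i j
    simp only [hBd, hJd, Matrix.mul_apply, Matrix.of_apply, Matrix.smul_apply, smul_eq_mul,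
      mul_one, one_mul, Finset.sum_boole]
    have : (Finset.univ.filter fun k : {x : G // x ∉ Subgroup.center G}
        => Commute (k : G) (j : G))
        = (Finset.univ : Finset {x : G // x ∉ Subgroup.center G}).filter
            (fun k : {x : G // x ∉ Subgroup.center G} => Commute (j : G) (k : G)) := by
      ext k
      simp only [Finset.mem_filter, Finset.mem_univ, true_and]
      exact ⟨Commute.symm, Commute.symm⟩
    rw [this, hrow j]
  have hBB : B * B = (m : ℝ) • B := by
    ext i j
    simp only [hBd, Matrix.mul_apply, Matrix.of_apply, Matrix.smul_apply, smul_eq_mul,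
      ite_mul, one_mul, zero_mul, mul_ite, mul_one, mul_zero]
    have hterm : ∀ k : {x : G // x ∉ Subgroup.center G},
        (if Commute (k : G) (j : G) then (if Commute (i : G) (k : G) then (1:ℝ) else 0) else 0)
        = if Commute (i : G) (k : G) ∧ Commute (k : G) (j : G) then (1:ℝ) else 0 := by
      intro k
      by_cases h1 : Commute (i : G) (k : G) <;> by_cases h2 : Commute (k : G) (j : G) <;>
        simp [h1, h2]
    rw [Finset.sum_congr rfl fun k _ => hterm k, Finset.sum_boole]
    by_cases hcom : Commute (i : G) (j : G)
    · have heq : (Finset.univ.filter fun k : {x : G // x ∉ Subgroup.center G}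
          => Commute (i : G) (k : G) ∧ Commute (k : G) (j : G))
          = Finset.univ.filter fun k : {x : G // x ∉ Subgroup.center G}
              => Commute (i : G) (k : G) := by
        ext k
        simp only [Finset.mem_filter, Finset.mem_univ, true_and]
        exact ⟨fun hh => hh.1, fun hh => ⟨hh, cent_trans p hp hgz hc (i : G) i.2 hh hcom⟩⟩
      rw [heq, hrow i, if_pos hcom]
    · have heq : (Finset.univ.filter fun k : {x : G // x ∉ Subgroup.center G}
          => Commute (i : G) (k : G) ∧ Commute (k : G) (j : G)) = ∅ := by
        rw [Finset.filter_eq_empty_iff]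
        rintro k - ⟨h1, h2⟩
        exact hcom (cent_trans p hp hgz hc (k : G) k.2 h1.symm h2)
      rw [heq, if_neg hcom]
      simp
  -- the polynomial identity for the Laplacian
  set c : ℝ := (n : ℝ) - m with hcd
  have hMM : (B - J) * (B - J) = (m : ℝ) • (B - J) + c • J := by
    rw [Matrix.sub_mul, Matrix.mul_sub, Matrix.mul_sub, hBB, hBJ, hJB, hJJ, hcd]
    module
  have hMJ : (B - J) * J = (-c) • J := by
    rw [Matrix.sub_mul, hBJ, hJJ, hcd]
    module
  have hq0 : ncLap G * (ncLap G - (n : ℝ) • 1) * (ncLap G - c • 1) = 0 := by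
    have hL : ncLap G = c • 1 + (B - J) := by rw [hLeq, hcd]; abel
    rw [hL]
    have h1 : c • (1 : Matrix {x : G // x ∉ Subgroup.center G}
        {x : G // x ∉ Subgroup.center G} ℝ) + (B - J) - (n : ℝ) • 1
        = (B - J) - (m : ℝ) • 1 := by rw [hcd]; module
    have h2 : c • (1 : Matrix {x : G // x ∉ Subgroup.center G}
        {x : G // x ∉ Subgroup.center G} ℝ) + (B - J) - c • 1 = B - J := by module
    rw [h1, h2, mul_assoc]
    have h3 : ((B - J) - (m : ℝ) • 1) * (B - J) = c • J := by
      rw [Matrix.sub_mul, Matrix.smul_mul, one_mul, hMM]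
      module
    rw [h3, Matrix.add_mul, Matrix.smul_mul, one_mul, Matrix.mul_smul, hMJ]
    module
  -- spectral argument
  set P : Polynomial ℝ := X * (X - C (n : ℝ)) * (X - C c) with hPd
  have haev : Polynomial.aeval (ncLap G) P = 0 := by
    rw [hPd]
    simp only [map_mul, map_sub, Polynomial.aeval_X, Polynomial.aeval_C,
      Algebra.algebraMap_eq_smul_one]
    exact hq0
  have hmem := spectrum.subset_polynomial_aeval (ncLap G) P ⟨μ, hμ, rfl⟩
  rw [haev] at hmem
  have hnu : ¬ IsUnit ((algebraMap ℝ (Matrix {x : G // x ∉ Subgroup.center G}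
      {x : G // x ∉ Subgroup.center G} ℝ)) (Polynomial.eval μ P)) := by
    simpa [spectrum.mem_iff] using hmem
  have hev0 : Polynomial.eval μ P = 0 := by
    by_contra hne
    exact hnu (IsUnit.map _ (isUnit_iff_ne_zero.mpr hne))
  rw [hPd] at hev0
  simp only [Polynomial.eval_mul, Polynomial.eval_sub, Polynomial.eval_X,
    Polynomial.eval_C] at hev0
  rcases mul_eq_zero.mp hev0 with h1 | h1
  · rcases mul_eq_zero.mp h1 with h2 | h2
    · exact ⟨0, by simpa using h2⟩
    · exact ⟨(n : ℤ), by push_cast; linarith [sub_eq_zero.mp h2]⟩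
  · refine ⟨(n : ℤ) - m, ?_⟩
    have := sub_eq_zero.mp h1
    rw [this, hcd]
    push_cast
    ring
end
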